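/- arXiv:2203.05261 — 3 statements merged into one kernel-verified Lean document; each statement's English description precedes it below -/
import Mathlib

section
/- Let d ≥ 1 and let D : ℝ^d → ℝ be the Cartesian linear box spline. Then for every integer p ≥ 1, ∫_{ℝ^d} D(x)^p dx = (d+1) · C(p+d, d)^{-1}, where C(p+d, d) is the binomial coefficient. In particular ∫_{ℝ^d} D(x) dx = 1 and ∫_{ℝ^d} D(x)² dx = 2/(d+2). -/
open MeasureTheory

/-- The Cartesian linear box spline on `ℝ^d`:
`D(x) = Σ_{ε ∈ {0,1}^{d+1}} (−1)^{|ε|} max(0, min_{1 ≤ i ≤ d} (x_i − ε_i − ε_{d+1}))`. -/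
noncomputable def boxSplineD (d : ℕ) (x : Fin d → ℝ) : ℝ :=
  ∑ ε : Fin (d + 1) → Fin 2,
    (-1 : ℝ) ^ (∑ i, (ε i : ℕ)) *
      max 0 (⨅ i : Fin d, (x i - ((ε (Fin.castSucc i) : ℕ) : ℝ) - ((ε (Fin.last d) : ℕ) : ℝ)))

noncomputable section
namespace BoxSplineAux

def bmin : ∀ {d : ℕ}, ℝ → (Fin d → ℝ) → ℝ
  | 0, a, _ => a
  | _ + 1, a, y => bmin (min a (y 0)) (Fin.tail y)

def bmax : ∀ {d : ℕ}, ℝ → (Fin d → ℝ) → ℝ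
  | 0, a, _ => a
  | _ + 1, a, y => bmax (max a (y 0)) (Fin.tail y)

lemma bmin_zero (a : ℝ) (y : Fin 0 → ℝ) : bmin a y = a := rfl
lemma bmin_succ {d : ℕ} (a : ℝ) (y : Fin (d+1) → ℝ) :
    bmin a y = bmin (min a (y 0)) (Fin.tail y) := rfl
lemma bmax_zero (a : ℝ) (y : Fin 0 → ℝ) : bmax a y = a := rfl
lemma bmax_succ {d : ℕ} (a : ℝ) (y : Fin (d+1) → ℝ) :
    bmax a y = bmax (max a (y 0)) (Fin.tail y) := rfl

lemma bmin_min : ∀ {d : ℕ} (a b : ℝ) (y : Fin d → ℝ), bmin (min a b) y = min a (bmin b y)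
  | 0, a, b, y => rfl
  | d + 1, a, b, y => by
      rw [bmin_succ, min_assoc, bmin_min a (min b (y 0)) (Fin.tail y), bmin_succ]

lemma bmax_max : ∀ {d : ℕ} (a b : ℝ) (y : Fin d → ℝ), bmax (max a b) y = max a (bmax b y)
  | 0, a, b, y => rfl
  | d + 1, a, b, y => by
      rw [bmax_succ, max_assoc, bmax_max a (max b (y 0)) (Fin.tail y), bmax_succ]

lemma fin_one_eq_zero' {n : ℕ} (hn : n = 0) (i : Fin (n+1)) : i = 0 := by
  subst hn; exact Fin.ext (by omega)

lemma iInf_fin_one {n : ℕ} (hn : n = 0) (y : Fin (n+1) → ℝ) : (⨅ i, y i) = y 0 := by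
  apply le_antisymm (ciInf_le (Set.finite_range y).bddBelow 0)
  exact le_ciInf fun i => by rw [fin_one_eq_zero' hn i]

lemma iSup_fin_one {n : ℕ} (hn : n = 0) (y : Fin (n+1) → ℝ) : (⨆ i, y i) = y 0 := by
  apply le_antisymm _ (le_ciSup (Set.finite_range y).bddAbove 0)
  exact ciSup_le fun i => by rw [fin_one_eq_zero' hn i]

lemma iInf_fin_succ {d : ℕ} (y : Fin (d+2) → ℝ) :
    (⨅ i, y i) = min (y 0) (⨅ i, Fin.tail y i) := by
  apply le_antisymm
  · refine le_min (ciInf_le (Set.finite_range y).bddBelow 0) ?_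
    exact le_ciInf fun i => ciInf_le (Set.finite_range y).bddBelow i.succ
  · refine le_ciInf fun i => ?_
    refine Fin.cases (min_le_left _ _) (fun j => ?_) i
    exact (min_le_right _ _).trans (ciInf_le (Set.finite_range _).bddBelow j)

lemma iSup_fin_succ {d : ℕ} (y : Fin (d+2) → ℝ) :
    (⨆ i, y i) = max (y 0) (⨆ i, Fin.tail y i) := by
  apply le_antisymm
  · refine ciSup_le fun i => ?_
    refine Fin.cases (le_max_left _ _) (fun j => ?_) i
    exact ((le_ciSup (Set.finite_range _).bddAbove j).trans (le_max_right _ _) :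
      Fin.tail y j ≤ _)
  · refine max_le (le_ciSup (Set.finite_range y).bddAbove 0) ?_
    exact ciSup_le fun i => le_ciSup (Set.finite_range y).bddAbove i.succ

lemma bmin_eq : ∀ {d : ℕ} (a : ℝ) (y : Fin (d+1) → ℝ), bmin a y = min a (⨅ i, y i)
  | 0, a, y => by rw [bmin_succ, bmin_zero, iInf_fin_one rfl]
  | d + 1, a, y => by rw [bmin_succ, bmin_eq, iInf_fin_succ y, min_assoc]

lemma bmax_eq : ∀ {d : ℕ} (a : ℝ) (y : Fin (d+1) → ℝ), bmax a y = max a (⨆ i, y i)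
  | 0, a, y => by rw [bmax_succ, bmax_zero, iSup_fin_one rfl]
  | d + 1, a, y => by rw [bmax_succ, bmax_eq, iSup_fin_succ y, max_assoc]

lemma iInf_sub_const : ∀ {d : ℕ} (y : Fin (d+1) → ℝ) (c : ℝ),
    (⨅ i, (y i - c)) = (⨅ i, y i) - c
  | 0, y, c => by rw [iInf_fin_one rfl, iInf_fin_one rfl]
  | d + 1, y, c => by
      rw [iInf_fin_succ (fun i => y i - c), iInf_fin_succ y]
      have h : (⨅ i, Fin.tail (fun i => y i - c) i) = (⨅ i, (Fin.tail y i - c)) := rfl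
      rw [h, iInf_sub_const (Fin.tail y) c, min_sub_sub_right]

lemma iSup_sub_const : ∀ {d : ℕ} (y : Fin (d+1) → ℝ) (c : ℝ),
    (⨆ i, (y i - c)) = (⨆ i, y i) - c
  | 0, y, c => by rw [iSup_fin_one rfl, iSup_fin_one rfl]
  | d + 1, y, c => by
      rw [iSup_fin_succ (fun i => y i - c), iSup_fin_succ y]
      have h : (⨆ i, Fin.tail (fun i => y i - c) i) = (⨆ i, (Fin.tail y i - c)) := rfl
      rw [h, iSup_sub_const (Fin.tail y) c, max_sub_sub_right]

lemma iInf_le_iSup' {d : ℕ} (y : Fin (d+1) → ℝ) : (⨅ i, y i) ≤ ⨆ i, y i :=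
  (ciInf_le (Set.finite_range y).bddBelow 0).trans (le_ciSup (Set.finite_range y).bddAbove 0)

lemma core (A y0 c : ℝ) :
    max 0 (min y0 A - c) - max 0 (min (y0 - 1) A - c) = max 0 (min y0 A - max c (y0 - 1)) := by
  rcases le_total y0 A with h | h <;> rcases le_total (y0 - 1) A with h' | h' <;>
    simp only [min_def, max_def] <;> split_ifs <;> linarith

lemma G : ∀ (d : ℕ) (a : ℝ) (y : Fin d → ℝ),
    (∑ ε : Fin d → Fin 2, (-1 : ℝ) ^ (∑ i, ((ε i : ℕ))) *
      max 0 (bmin a fun i => y i - ((ε i : ℕ) : ℝ))) =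
    max 0 (bmin a y - bmax 0 fun i => y i - 1)
  | 0, a, y => by
      rw [Fintype.sum_unique]
      simp [bmin_zero, bmax_zero]
  | d + 1, a, y => by
      have hsum := Fintype.sum_equiv (Fin.consEquiv (fun _ : Fin (d+1) => Fin 2))
        (fun q : Fin 2 × (Fin d → Fin 2) =>
          (-1 : ℝ) ^ (∑ i, ((Fin.cons q.1 q.2 : ∀ _ : Fin (d+1), Fin 2) i : ℕ)) *
            max 0 (bmin a fun i => y i - (((Fin.cons q.1 q.2 : ∀ _ : Fin (d+1), Fin 2) i : ℕ) : ℝ)))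
        (fun ε : Fin (d+1) → Fin 2 =>
          (-1 : ℝ) ^ (∑ i, ((ε i : ℕ))) * max 0 (bmin a fun i => y i - ((ε i : ℕ) : ℝ)))
        (fun q => rfl)
      rw [← hsum, Fintype.sum_prod_type]
      have key : ∀ e0 : Fin 2,
          (∑ ε' : Fin d → Fin 2,
            (-1 : ℝ) ^ (∑ i, ((Fin.cons e0 ε' : ∀ _ : Fin (d+1), Fin 2) i : ℕ)) *
              max 0 (bmin a fun i => y i - (((Fin.cons e0 ε' : ∀ _ : Fin (d+1), Fin 2) i : ℕ) : ℝ))) =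
          (-1 : ℝ) ^ (e0 : ℕ) *
            max 0 (min (y 0 - (e0 : ℕ)) (bmin a (Fin.tail y)) -
              bmax 0 (fun i => Fin.tail y i - 1)) := by
        intro e0
        have step : ∀ ε' : Fin d → Fin 2,
            (-1 : ℝ) ^ (∑ i, ((Fin.cons e0 ε' : ∀ _ : Fin (d+1), Fin 2) i : ℕ)) *
              max 0 (bmin a fun i => y i - (((Fin.cons e0 ε' : ∀ _ : Fin (d+1), Fin 2) i : ℕ) : ℝ)) =
            (-1 : ℝ) ^ (e0 : ℕ) * ((-1 : ℝ) ^ (∑ i, ((ε' i : ℕ))) *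
              max 0 (bmin (min a (y 0 - (e0 : ℕ))) fun i => Fin.tail y i - ((ε' i : ℕ) : ℝ))) := by
          intro ε'
          have h1 : (∑ i, ((Fin.cons e0 ε' : ∀ _ : Fin (d+1), Fin 2) i : ℕ)) =
              (e0 : ℕ) + ∑ i, ((ε' i : ℕ)) := by
            simp only [Fin.sum_univ_succ, Fin.cons_zero, Fin.cons_succ]
          have h2 : (bmin a fun i => y i - (((Fin.cons e0 ε' : ∀ _ : Fin (d+1), Fin 2) i : ℕ) : ℝ)) =
              bmin (min a (y 0 - (e0 : ℕ))) fun i => Fin.tail y i - ((ε' i : ℕ) : ℝ) := by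
            rw [bmin_succ]
            have h3 : (Fin.tail fun i : Fin (d+1) =>
                y i - (((Fin.cons e0 ε' : ∀ _ : Fin (d+1), Fin 2) i : ℕ) : ℝ)) =
                fun i => Fin.tail y i - ((ε' i : ℕ) : ℝ) := by
              funext i; simp only [Fin.tail, Fin.cons_succ]
            rw [h3]
            simp only [Fin.cons_zero]
          rw [h1, h2, pow_add, mul_assoc]
        rw [Finset.sum_congr rfl (fun ε' _ => step ε'), ← Finset.mul_sum,
          G d (min a (y 0 - (e0 : ℕ))) (Fin.tail y), min_comm a, bmin_min]
      rw [Fin.sum_univ_two, key 0, key 1]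
      have hb1 : bmin a y = min (y 0) (bmin a (Fin.tail y)) := by
        rw [bmin_succ, min_comm a, bmin_min]
      have hb2 : (bmax 0 fun i => y i - 1) =
          max (y 0 - 1) (bmax 0 fun i => Fin.tail y i - 1) := by
        rw [bmax_succ]
        have h3 : (Fin.tail fun i => y i - 1) = fun i => Fin.tail y i - 1 := rfl
        rw [h3, max_comm (0:ℝ), bmax_max]
      rw [hb1, hb2]
      have hc := core (bmin a (Fin.tail y)) (y 0) (bmax 0 fun i => Fin.tail y i - 1)
      have hmc : max (bmax 0 fun i => Fin.tail y i - 1) (y 0 - 1)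
          = max (y 0 - 1) (bmax 0 fun i => Fin.tail y i - 1) := max_comm _ _
      have h0 : (((0 : Fin 2) : ℕ) : ℝ) = 0 := by norm_num
      have h1 : (((1 : Fin 2) : ℕ) : ℝ) = 1 := by norm_num
      rw [h0, h1, max_comm (y 0 - 1) (bmax 0 fun i => Fin.tail y i - 1)]
      simp only [pow_zero, pow_one, one_mul, neg_one_mul, sub_zero,
        Fin.val_zero, Fin.val_one]
      linarith [hc]

end BoxSplineAux
namespace BoxSplineAux

lemma fin_combine (m M : ℝ) (h : m ≤ M) :
    max 0 (m - max 0 (M - 1)) - max 0 (m - 1 - max 0 (M - 2)) =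
      max 0 (min m 1 - max (M - 1) 0) := by
  simp only [min_def, max_def]
  split_ifs <;> linarith

lemma boxSplineD_eq (d : ℕ) (x : Fin (d+1) → ℝ) :
    boxSplineD (d+1) x =
      max 0 (min (⨅ i, x i) 1 - max ((⨆ i, x i) - 1) 0) := by
  classical
  set m := ⨅ i, x i with hm
  set M := ⨆ i, x i with hM
  have hmle : m ≤ M := iInf_le_iSup' x
  have hm0 : m ≤ x 0 := ciInf_le (Set.finite_range x).bddBelow 0
  rw [boxSplineD]
  have hsum := Fintype.sum_equiv (Fin.snocEquiv (fun _ : Fin (d+2) => Fin 2))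
    (fun q : Fin 2 × (Fin (d+1) → Fin 2) =>
      (-1 : ℝ) ^ (∑ i, ((Fin.snoc q.2 q.1 : ∀ _ : Fin (d+2), Fin 2) i : ℕ)) *
        max 0 (⨅ i : Fin (d+1),
          (x i - (((Fin.snoc q.2 q.1 : ∀ _ : Fin (d+2), Fin 2) (Fin.castSucc i) : ℕ) : ℝ)
            - (((Fin.snoc q.2 q.1 : ∀ _ : Fin (d+2), Fin 2) (Fin.last (d+1)) : ℕ) : ℝ))))
    (fun ε : Fin (d+2) → Fin 2 =>
      (-1 : ℝ) ^ (∑ i, ((ε i : ℕ))) *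
        max 0 (⨅ i : Fin (d+1),
          (x i - ((ε (Fin.castSucc i) : ℕ) : ℝ) - ((ε (Fin.last (d+1)) : ℕ) : ℝ))))
    (fun q => rfl)
  rw [← hsum, Fintype.sum_prod_type]
  have key : ∀ e : Fin 2,
      (∑ ε' : Fin (d+1) → Fin 2,
        (-1 : ℝ) ^ (∑ i, ((Fin.snoc ε' e : ∀ _ : Fin (d+2), Fin 2) i : ℕ)) *
          max 0 (⨅ i : Fin (d+1),
            (x i - (((Fin.snoc ε' e : ∀ _ : Fin (d+2), Fin 2) (Fin.castSucc i) : ℕ) : ℝ)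
              - (((Fin.snoc ε' e : ∀ _ : Fin (d+2), Fin 2) (Fin.last (d+1)) : ℕ) : ℝ)))) =
      (-1 : ℝ) ^ (e : ℕ) * max 0 ((m - (e : ℕ)) - max 0 (M - (e : ℕ) - 1)) := by
    intro e
    have step : ∀ ε' : Fin (d+1) → Fin 2,
        (-1 : ℝ) ^ (∑ i, ((Fin.snoc ε' e : ∀ _ : Fin (d+2), Fin 2) i : ℕ)) *
          max 0 (⨅ i : Fin (d+1),
            (x i - (((Fin.snoc ε' e : ∀ _ : Fin (d+2), Fin 2) (Fin.castSucc i) : ℕ) : ℝ)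
              - (((Fin.snoc ε' e : ∀ _ : Fin (d+2), Fin 2) (Fin.last (d+1)) : ℕ) : ℝ))) =
        (-1 : ℝ) ^ (e : ℕ) * ((-1 : ℝ) ^ (∑ i, ((ε' i : ℕ))) *
          max 0 (bmin (x 0 - (e : ℕ))
            (fun i => (x i - (e : ℕ)) - ((ε' i : ℕ) : ℝ)))) := by
      intro ε'
      have h1 : (∑ i, ((Fin.snoc ε' e : ∀ _ : Fin (d+2), Fin 2) i : ℕ)) =
          (e : ℕ) + ∑ i, ((ε' i : ℕ)) := by
        rw [Fin.sum_univ_castSucc]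
        simp only [Fin.snoc_castSucc, Fin.snoc_last]
        ring
      have h2 : (⨅ i : Fin (d+1),
            (x i - (((Fin.snoc ε' e : ∀ _ : Fin (d+2), Fin 2) (Fin.castSucc i) : ℕ) : ℝ)
              - (((Fin.snoc ε' e : ∀ _ : Fin (d+2), Fin 2) (Fin.last (d+1)) : ℕ) : ℝ))) =
          bmin (x 0 - (e : ℕ)) (fun i => (x i - (e : ℕ)) - ((ε' i : ℕ) : ℝ)) := by
        have hz : (fun i : Fin (d+1) =>
            (x i - (((Fin.snoc ε' e : ∀ _ : Fin (d+2), Fin 2) (Fin.castSucc i) : ℕ) : ℝ)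
              - (((Fin.snoc ε' e : ∀ _ : Fin (d+2), Fin 2) (Fin.last (d+1)) : ℕ) : ℝ))) =
            fun i => (x i - (e : ℕ)) - ((ε' i : ℕ) : ℝ) := by
          funext i
          simp only [Fin.snoc_castSucc, Fin.snoc_last]
          ring
        rw [hz, bmin_eq]
        refine (min_eq_right ((ciInf_le (Set.finite_range _).bddBelow 0).trans ?_)).symm
        have : ((ε' 0 : ℕ) : ℝ) ≥ 0 := by positivity
        linarith
      rw [h1, h2, pow_add, mul_assoc]
    rw [Finset.sum_congr rfl (fun ε' _ => step ε'), ← Finset.mul_sum]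
    congr 1
    rw [G (d+1) (x 0 - (e : ℕ)) (fun i => x i - ((e : ℕ) : ℝ))]
    have hbm : bmin (x 0 - ((e : ℕ) : ℝ)) (fun i => x i - ((e : ℕ) : ℝ)) = m - ((e : ℕ) : ℝ) := by
      rw [bmin_eq]
      have h4 : (⨅ i, (x i - ((e : ℕ) : ℝ))) = m - ((e : ℕ) : ℝ) := iInf_sub_const x _
      rw [h4, min_eq_right (by linarith)]
    have hbx : (bmax 0 fun i => (x i - ((e : ℕ) : ℝ)) - 1) = max 0 (M - ((e : ℕ) : ℝ) - 1) := by
      rw [bmax_eq]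
      have h5 : (fun i => (x i - ((e : ℕ) : ℝ)) - 1) = fun i => x i - (((e : ℕ) : ℝ) + 1) := by
        funext i; ring
      have h6 : (⨆ i, (x i - (((e : ℕ) : ℝ) + 1))) = M - (((e : ℕ) : ℝ) + 1) :=
        iSup_sub_const x _
      rw [h5, h6, sub_add_eq_sub_sub]
    rw [hbm, hbx]
  rw [Fin.sum_univ_two, key 0, key 1]
  have h0 : (((0 : Fin 2) : ℕ) : ℝ) = 0 := by norm_num
  have h1 : (((1 : Fin 2) : ℕ) : ℝ) = 1 := by norm_num
  rw [h0, h1]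
  simp only [pow_zero, pow_one, one_mul, neg_one_mul, sub_zero, Fin.val_zero, Fin.val_one]
  have hM2 : M - 1 - 1 = M - 2 := by ring
  rw [hM2]
  have := fin_combine m M hmle
  linarith [this]

lemma boxSplineD_nonneg (d : ℕ) (x : Fin (d+1) → ℝ) : 0 ≤ boxSplineD (d+1) x := by
  rw [boxSplineD_eq]; exact le_max_left _ _

end BoxSplineAux
namespace BoxSplineAux

lemma sup_attained {n : ℕ} (y : Fin (n+1) → ℝ) : ∃ i0, (⨆ j, y j) = y i0 := by
  obtain ⟨i0, hi0⟩ := Finite.exists_max y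
  exact ⟨i0, le_antisymm (ciSup_le hi0) (le_ciSup (Set.finite_range y).bddAbove i0)⟩

lemma inf_attained {n : ℕ} (y : Fin (n+1) → ℝ) : ∃ i0, (⨅ j, y j) = y i0 := by
  obtain ⟨i0, hi0⟩ := Finite.exists_min y
  exact ⟨i0, le_antisymm (ciInf_le (Set.finite_range y).bddBelow i0) (le_ciInf hi0)⟩

lemma forall_le_iff_sup {n : ℕ} (y : Fin (n+1) → ℝ) (c : ℝ) :
    (∀ j, y j ≤ c) ↔ (⨆ j, y j) ≤ c := by
  constructor
  · exact fun h => ciSup_le h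
  · intro h j; exact (le_ciSup (Set.finite_range y).bddAbove j).trans h

lemma forall_ge_iff_inf {n : ℕ} (y : Fin (n+1) → ℝ) (c : ℝ) :
    (∀ j, c ≤ y j) ↔ c ≤ ⨅ j, y j := by
  constructor
  · exact fun h => le_ciInf h
  · intro h j; exact h.trans (ciInf_le (Set.finite_range y).bddBelow j)

lemma forall_lt_iff_sup {n : ℕ} (y : Fin (n+1) → ℝ) (c : ℝ) :
    (∀ j, y j < c) ↔ (⨆ j, y j) < c := by
  obtain ⟨i0, h0⟩ := sup_attained y
  constructor
  · intro h; rw [h0]; exact h i0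
  · intro h j; exact lt_of_le_of_lt ((le_ciSup (Set.finite_range y).bddAbove j)) h

lemma forall_gt_iff_inf {n : ℕ} (y : Fin (n+1) → ℝ) (c : ℝ) :
    (∀ j, c < y j) ↔ c < ⨅ j, y j := by
  obtain ⟨i0, h0⟩ := inf_attained y
  constructor
  · intro h; rw [h0]; exact h i0
  · intro h j; exact lt_of_lt_of_le h (ciInf_le (Set.finite_range y).bddBelow j)

/-- The interval whose length is the box spline value. -/
def Iset {d : ℕ} (x : Fin (d+1) → ℝ) : Set ℝ :=
  Set.Ioc (max ((⨆ i, x i) - 1) 0) (min (⨅ i, x i) 1)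

lemma ofReal_boxSplineD {d : ℕ} (x : Fin (d+1) → ℝ) :
    ENNReal.ofReal (boxSplineD (d+1) x) = volume (Iset x) := by
  rw [boxSplineD_eq, Iset, Real.volume_Ioc]
  rcases le_total (min (⨅ i, x i) 1 - max ((⨆ i, x i) - 1) 0) 0 with h | h
  · rw [max_eq_left h, ENNReal.ofReal_zero, ENNReal.ofReal_of_nonpos h]
  · rw [max_eq_right h]

lemma mem_Iset {d : ℕ} (x : Fin (d+1) → ℝ) (t : ℝ) :
    t ∈ Iset x ↔ (t ∈ Set.Ioc (0:ℝ) 1 ∧ ∀ i, t ≤ x i ∧ x i < t + 1) := by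
  simp only [Iset, Set.mem_Ioc, max_lt_iff, le_min_iff, forall_and]
  rw [← forall_ge_iff_inf]
  constructor
  · rintro ⟨⟨h1, h2⟩, h3, h4⟩
    refine ⟨⟨h2, h4⟩, h3, fun i => ?_⟩
    have := le_ciSup (Set.finite_range x).bddAbove i
    linarith
  · rintro ⟨⟨h2, h4⟩, h3, h5⟩
    have := (forall_lt_iff_sup x (t+1)).1 h5
    exact ⟨⟨by linarith, h2⟩, h3, h4⟩

/-- The joint region for the Fubini argument. -/
def Bset (d p : ℕ) : Set ((Fin d → ℝ) × (Fin p → ℝ)) :=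
  {q | (∀ j, q.2 j ∈ Set.Ioc (0:ℝ) 1) ∧ ∀ i j, q.2 j ≤ q.1 i ∧ q.1 i < q.2 j + 1}

lemma measurable_Bset (d p : ℕ) : MeasurableSet (Bset d p) := by
  have ht : ∀ j : Fin p, Measurable fun q : (Fin d → ℝ) × (Fin p → ℝ) => q.2 j :=
    fun j => (measurable_pi_apply j).comp measurable_snd
  have hx : ∀ i : Fin d, Measurable fun q : (Fin d → ℝ) × (Fin p → ℝ) => q.1 i :=
    fun i => (measurable_pi_apply i).comp measurable_fst
  have h1 : Bset d p =
      (⋂ j, ({q : (Fin d → ℝ) × (Fin p → ℝ) | 0 < q.2 j} ∩ {q | q.2 j ≤ 1})) ∩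
        (⋂ i, ⋂ j, ({q : (Fin d → ℝ) × (Fin p → ℝ) | q.2 j ≤ q.1 i} ∩
          {q | q.1 i < q.2 j + 1})) := by
    ext q
    simp only [Bset, Set.mem_setOf_eq, Set.mem_inter_iff, Set.mem_iInter, Set.mem_Ioc,
      forall_and]
    try tauto
  rw [h1]
  exact (MeasurableSet.iInter fun j =>
      (measurableSet_lt measurable_const (ht j)).inter
        (measurableSet_le (ht j) measurable_const)).inter
    (MeasurableSet.iInter fun i => MeasurableSet.iInter fun j =>
      (measurableSet_le (ht j) (hx i)).inter
        (measurableSet_lt (hx i) ((ht j).add_const 1)))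

lemma section_t {d p : ℕ} (x : Fin (d+1) → ℝ) :
    (Prod.mk x ⁻¹' Bset (d+1) (p+1)) = Set.univ.pi (fun _ : Fin (p+1) => Iset x) := by
  ext t
  simp only [Set.mem_preimage, Bset, Set.mem_setOf_eq, Set.mem_pi, Set.mem_univ,
    forall_const, mem_Iset, forall_and]
  tauto

lemma vol_section_t {d p : ℕ} (x : Fin (d+1) → ℝ) :
    volume (Prod.mk x ⁻¹' Bset (d+1) (p+1)) =
      (ENNReal.ofReal (boxSplineD (d+1) x)) ^ (p+1) := by
  rw [section_t, volume_pi_pi, ofReal_boxSplineD]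
  simp [Finset.prod_const]

lemma section_x {d p : ℕ} (t : Fin (p+1) → ℝ) :
    volume ((fun x : Fin (d+1) → ℝ => (x, t)) ⁻¹' Bset (d+1) (p+1)) =
      (Set.univ.pi fun _ : Fin (p+1) => Set.Ioc (0:ℝ) 1).indicator
        (fun t => (ENNReal.ofReal ((⨅ j, t j) + 1 - ⨆ j, t j)) ^ (d+1)) t := by
  by_cases h : ∀ j, t j ∈ Set.Ioc (0:ℝ) 1
  · rw [Set.indicator_of_mem (by simpa [Set.mem_pi] using h)]
    have hset : ((fun x : Fin (d+1) → ℝ => (x, t)) ⁻¹' Bset (d+1) (p+1)) =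
        Set.univ.pi (fun _ : Fin (d+1) => Set.Ico (⨆ j, t j) ((⨅ j, t j) + 1)) := by
      ext x
      simp only [Set.mem_preimage, Bset, Set.mem_setOf_eq, Set.mem_pi, Set.mem_univ,
        forall_const, Set.mem_Ico]
      constructor
      · rintro ⟨-, h2⟩ i
        refine ⟨(forall_le_iff_sup t (x i)).1 (fun j => (h2 i j).1), ?_⟩
        have := (forall_gt_iff_inf t (x i - 1)).1 (fun j => by linarith [(h2 i j).2])
        linarith
      · intro h2
        refine ⟨h, fun i j => ?_⟩
        obtain ⟨ha, hb⟩ := h2 i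
        constructor
        · exact ((le_ciSup (Set.finite_range t).bddAbove j).trans ha)
        · have := (ciInf_le (Set.finite_range t).bddBelow j)
          linarith
    rw [hset, volume_pi_pi]
    simp [Real.volume_Ico, Finset.prod_const]
  · rw [Set.indicator_of_notMem (by simpa [Set.mem_pi] using h)]
    have hset : ((fun x : Fin (d+1) → ℝ => (x, t)) ⁻¹' Bset (d+1) (p+1)) = ∅ := by
      ext x
      simp only [Set.mem_preimage, Bset, Set.mem_setOf_eq, Set.mem_empty_iff_false,
        iff_false, not_and]
      intro h'
      exact absurd h' h
    simp [hset]

lemma S_eq (d p : ℕ) :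
    (∫⁻ x : Fin (d+1) → ℝ, (ENNReal.ofReal (boxSplineD (d+1) x)) ^ (p+1)) =
      ∫⁻ t : Fin (p+1) → ℝ,
        (Set.univ.pi fun _ : Fin (p+1) => Set.Ioc (0:ℝ) 1).indicator
          (fun t => (ENNReal.ofReal ((⨅ j, t j) + 1 - ⨆ j, t j)) ^ (d+1)) t := by
  have h1 : (∫⁻ x : Fin (d+1) → ℝ, (ENNReal.ofReal (boxSplineD (d+1) x)) ^ (p+1)) =
      ∫⁻ x : Fin (d+1) → ℝ, volume (Prod.mk x ⁻¹' Bset (d+1) (p+1)) := by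
    refine lintegral_congr fun x => (vol_section_t x).symm
  rw [h1, ← Measure.prod_apply (measurable_Bset (d+1) (p+1)),
    Measure.prod_apply_symm (measurable_Bset (d+1) (p+1))]
  exact lintegral_congr fun t => section_x t

end BoxSplineAux
namespace BoxSplineAux

lemma betaNat : ∀ (m k : ℕ), (∫ x in (0:ℝ)..1, x ^ k * (1 - x) ^ m) =
    (Nat.factorial k : ℝ) * (Nat.factorial m) / (Nat.factorial (k + m + 1))
  | 0, k => by
      simp only [pow_zero, mul_one, integral_pow]
      have h : k + 0 + 1 = k + 1 := by ring
      rw [h, Nat.factorial_succ]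
      push_cast
      have : (k : ℝ) + 1 ≠ 0 := by positivity
      field_simp
      simp
  | (m+1), k => by
      have hk1 : ((k : ℝ) + 1) ≠ 0 := by positivity
      have hu : ∀ x ∈ Set.uIcc (0:ℝ) 1, HasDerivAt (fun x : ℝ => x ^ (k+1) / (k+1))
          (x ^ k) x := by
        intro x _
        have h := (hasDerivAt_pow (k+1) x).div_const ((k : ℝ) + 1)
        have h2 : (↑(k + 1) * x ^ (k + 1 - 1)) / ((k : ℝ) + 1) = x ^ k := by
          push_cast; field_simp
        rwa [h2] at h
      have hv : ∀ x ∈ Set.uIcc (0:ℝ) 1, HasDerivAt (fun x : ℝ => (1 - x) ^ (m+1))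
          (-((m+1 : ℝ) * (1 - x) ^ m)) x := by
        intro x _
        have hlin : HasDerivAt (fun x : ℝ => 1 - x) (-1) x := by
          simpa using (hasDerivAt_id x).const_sub 1
        have h := (hasDerivAt_pow (m+1) (1 - x)).comp x hlin
        have h2 : (↑(m + 1) * (1 - x) ^ (m + 1 - 1)) * (-1) = -((m+1 : ℝ) * (1 - x) ^ m) := by
          push_cast; ring
        rwa [h2] at h
      have hu' : IntervalIntegrable (fun x : ℝ => x ^ k) volume 0 1 :=
        (continuous_pow k).intervalIntegrable 0 1
      have hv' : IntervalIntegrable (fun x : ℝ => -((m+1 : ℝ) * (1 - x) ^ m)) volume 0 1 :=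
        (continuous_const.mul ((continuous_const.sub continuous_id).pow m)).neg.intervalIntegrable 0 1
      have H := intervalIntegral.integral_mul_deriv_eq_deriv_mul hu hv hu' hv'
      -- H : ∫ x^k * (1-x)^(m+1) = ... - ∫ (x^(k+1)/(k+1)) * (-( (m+1)(1-x)^m))
      have hre : (∫ x in (0:ℝ)..1, x ^ (k+1) / ((k:ℝ)+1) * -((m+1 : ℝ) * (1 - x) ^ m)) =
          (-((m+1 : ℝ) / ((k:ℝ)+1))) * ∫ x in (0:ℝ)..1, x ^ (k+1) * (1 - x) ^ m := by
        rw [← intervalIntegral.integral_const_mul]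
        congr 1; funext x; field_simp
      rw [hre, betaNat m (k+1)] at H
      have hE1 : ((1:ℝ))^(k+1)/((k:ℝ)+1) * ((1:ℝ)-(1:ℝ))^(m+1) = 0 := by norm_num
      have hE2 : ((0:ℝ))^(k+1)/((k:ℝ)+1) * ((1:ℝ)-(0:ℝ))^(m+1) = 0 := by norm_num
      have hI : (∫ x in (0:ℝ)..1, x ^ k * (1 - x) ^ (m+1)) =
          ((m:ℝ)+1)/((k:ℝ)+1) *
            ((Nat.factorial (k+1) : ℝ) * (Nat.factorial m) / (Nat.factorial (k+1+m+1))) := by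
        rw [hE1, hE2] at H
        linarith
      rw [hI]
      have e1 : k + 1 + m + 1 = (k + m + 1) + 1 := by ring
      have e2 : k + (m + 1) + 1 = (k + m + 1) + 1 := by ring
      rw [e1, e2, Nat.factorial_succ (k+m+1), Nat.factorial_succ k, Nat.factorial_succ m]
      have hne : ((Nat.factorial (k+m+1) : ℝ)) ≠ 0 :=
        Nat.cast_ne_zero.2 (Nat.factorial_ne_zero _)
      have hnk : ((Nat.factorial k : ℝ)) ≠ 0 := Nat.cast_ne_zero.2 (Nat.factorial_ne_zero _)
      have hnm : ((Nat.factorial m : ℝ)) ≠ 0 := Nat.cast_ne_zero.2 (Nat.factorial_ne_zero _)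
      push_cast
      field_simp

end BoxSplineAux
namespace BoxSplineAux

lemma lint_pow_Ioc (k : ℕ) {a : ℝ} (ha : 0 ≤ a) :
    (∫⁻ s in Set.Ioc (0:ℝ) a, (ENNReal.ofReal s) ^ k) =
      ENNReal.ofReal (a ^ (k+1) / (k+1)) := by
  have h1 : (∫⁻ s in Set.Ioc (0:ℝ) a, (ENNReal.ofReal s) ^ k) =
      ∫⁻ s in Set.Ioc (0:ℝ) a, ENNReal.ofReal (s ^ k) := by
    refine setLIntegral_congr_fun measurableSet_Ioc ?_
    intro s hs
    beta_reduce
    rw [ENNReal.ofReal_pow hs.1.le]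
  rw [h1, ← ofReal_integral_eq_lintegral_ofReal]
  · congr 1
    rw [← intervalIntegral.integral_of_le ha, integral_pow]
    simp
  · exact (continuous_pow k).integrableOn_Ioc
  · exact (ae_restrict_iff' measurableSet_Ioc).2
      (Filter.Eventually.of_forall fun s hs => pow_nonneg hs.1.le k)

lemma lint_pow_one_sub_Ioc (m : ℕ) {b : ℝ} (hb : b ≤ 1) :
    (∫⁻ s in Set.Ioc b 1, (ENNReal.ofReal (1 - s)) ^ m) =
      ENNReal.ofReal ((1 - b) ^ (m+1) / (m+1)) := by
  have h1 : (∫⁻ s in Set.Ioc b 1, (ENNReal.ofReal (1 - s)) ^ m) =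
      ∫⁻ s in Set.Ioc b 1, ENNReal.ofReal ((1 - s) ^ m) := by
    refine setLIntegral_congr_fun measurableSet_Ioc ?_
    intro s hs
    beta_reduce
    rw [ENNReal.ofReal_pow (by linarith [hs.2])]
  rw [h1, ← ofReal_integral_eq_lintegral_ofReal]
  · congr 1
    rw [← intervalIntegral.integral_of_le hb,
      intervalIntegral.integral_comp_sub_left (fun x => x ^ m) 1, integral_pow]
    simp
  · exact ((continuous_const.sub continuous_id).pow m).integrableOn_Ioc
  · exact (ae_restrict_iff' measurableSet_Ioc).2
      (Filter.Eventually.of_forall fun s hs => pow_nonneg (by linarith [hs.2]) m)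

lemma lint_beta (k m : ℕ) :
    (∫⁻ s in Set.Ioc (0:ℝ) 1, (ENNReal.ofReal s) ^ k * (ENNReal.ofReal (1 - s)) ^ m) =
      ENNReal.ofReal ((Nat.factorial k : ℝ) * (Nat.factorial m) /
        (Nat.factorial (k + m + 1))) := by
  have h1 : (∫⁻ s in Set.Ioc (0:ℝ) 1, (ENNReal.ofReal s) ^ k * (ENNReal.ofReal (1 - s)) ^ m) =
      ∫⁻ s in Set.Ioc (0:ℝ) 1, ENNReal.ofReal (s ^ k * (1 - s) ^ m) := by
    refine setLIntegral_congr_fun measurableSet_Ioc ?_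
    intro s hs
    beta_reduce
    rw [ENNReal.ofReal_mul (pow_nonneg hs.1.le k), ENNReal.ofReal_pow hs.1.le,
      ENNReal.ofReal_pow (by linarith [hs.2])]
  rw [h1, ← ofReal_integral_eq_lintegral_ofReal]
  · congr 1
    rw [← intervalIntegral.integral_of_le (by norm_num : (0:ℝ) ≤ 1), betaNat]
  · exact ((continuous_pow k).mul ((continuous_const.sub continuous_id).pow m)).integrableOn_Ioc
  · exact (ae_restrict_iff' measurableSet_Ioc).2
      (Filter.Eventually.of_forall fun s hs =>
        mul_nonneg (pow_nonneg hs.1.le k) (pow_nonneg (by linarith [hs.2]) m))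

end BoxSplineAux
namespace BoxSplineAux

def cube (p : ℕ) : Set (Fin p → ℝ) := Set.univ.pi fun _ => Set.Ioc (0:ℝ) 1

lemma measurable_cube (p : ℕ) : MeasurableSet (cube p) :=
  MeasurableSet.univ_pi fun _ => measurableSet_Ioc

lemma mem_cube {p : ℕ} (t : Fin p → ℝ) : t ∈ cube p ↔ ∀ j, t j ∈ Set.Ioc (0:ℝ) 1 := by
  simp [cube]

lemma measurable_inf : ∀ {p : ℕ}, Measurable fun t : Fin (p+1) → ℝ => ⨅ j, t j
  | 0 => by
      have h : (fun t : Fin 1 → ℝ => ⨅ j, t j) = fun t => t 0 :=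
        funext fun t => iInf_fin_one rfl t
      rw [h]; exact measurable_pi_apply 0
  | p + 1 => by
      have h : (fun t : Fin (p+2) → ℝ => ⨅ j, t j) =
          fun t => min (t 0) ((fun y : Fin (p+1) → ℝ => ⨅ j, y j) (Fin.tail t)) :=
        funext fun t => iInf_fin_succ t
      rw [h]
      exact (measurable_pi_apply 0).min
        (measurable_inf.comp (measurable_pi_lambda _ fun j => measurable_pi_apply j.succ))

lemma measurable_sup : ∀ {p : ℕ}, Measurable fun t : Fin (p+1) → ℝ => ⨆ j, t j
  | 0 => by
      have h : (fun t : Fin 1 → ℝ => ⨆ j, t j) = fun t => t 0 :=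
        funext fun t => iSup_fin_one rfl t
      rw [h]; exact measurable_pi_apply 0
  | p + 1 => by
      have h : (fun t : Fin (p+2) → ℝ => ⨆ j, t j) =
          fun t => max (t 0) ((fun y : Fin (p+1) → ℝ => ⨆ j, y j) (Fin.tail t)) :=
        funext fun t => iSup_fin_succ t
      rw [h]
      exact (measurable_pi_apply 0).max
        (measurable_sup.comp (measurable_pi_lambda _ fun j => measurable_pi_apply j.succ))

/-- `F p k m = ∫_{(0,1]^p} (min t)^k (1 - max t)^m dt` as a Lebesgue integral. -/
def Ffun (p k m : ℕ) : ENNReal :=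
  ∫⁻ t : Fin p → ℝ, (cube p).indicator
    (fun t => (ENNReal.ofReal (⨅ j, t j)) ^ k * (ENNReal.ofReal (1 - ⨆ j, t j)) ^ m) t

/-- `M p k m = ∫_{(0,1]^p} (max t - min t) (min t)^k (1 - max t)^m dt`. -/
def Mfun (p k m : ℕ) : ENNReal :=
  ∫⁻ t : Fin p → ℝ, (cube p).indicator
    (fun t => ENNReal.ofReal ((⨆ j, t j) - ⨅ j, t j) *
      ((ENNReal.ofReal (⨅ j, t j)) ^ k * (ENNReal.ofReal (1 - ⨆ j, t j)) ^ m)) t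

lemma meas_Fint (p k m : ℕ) : Measurable fun t : Fin (p+1) → ℝ =>
    (cube (p+1)).indicator (fun t => (ENNReal.ofReal (⨅ j, t j)) ^ k *
      (ENNReal.ofReal (1 - ⨆ j, t j)) ^ m) t :=
  Measurable.indicator
    (((ENNReal.measurable_ofReal.comp measurable_inf).pow_const k).mul
      ((ENNReal.measurable_ofReal.comp (measurable_const.sub measurable_sup)).pow_const m))
    (measurable_cube _)

lemma meas_Mint (p k m : ℕ) : Measurable fun t : Fin (p+1) → ℝ =>
    (cube (p+1)).indicator (fun t => ENNReal.ofReal ((⨆ j, t j) - ⨅ j, t j) *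
      ((ENNReal.ofReal (⨅ j, t j)) ^ k * (ENNReal.ofReal (1 - ⨆ j, t j)) ^ m)) t :=
  Measurable.indicator
    ((ENNReal.measurable_ofReal.comp (measurable_sup.sub measurable_inf)).mul
      (((ENNReal.measurable_ofReal.comp measurable_inf).pow_const k).mul
        ((ENNReal.measurable_ofReal.comp (measurable_const.sub measurable_sup)).pow_const m)))
    (measurable_cube _)

lemma Ffun_one (k m : ℕ) : Ffun 1 k m =
    ENNReal.ofReal ((Nat.factorial k : ℝ) * (Nat.factorial m) / (Nat.factorial (k + m + 1))) := by
  rw [Ffun]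
  have hg : Measurable fun s : ℝ => (Set.Ioc (0:ℝ) 1).indicator
      (fun s => (ENNReal.ofReal s) ^ k * (ENNReal.ofReal (1 - s)) ^ m) s :=
    Measurable.indicator
      ((ENNReal.measurable_ofReal.pow_const k).mul
        ((ENNReal.measurable_ofReal.comp (measurable_const.sub measurable_id)).pow_const m))
      measurableSet_Ioc
  have key := (MeasureTheory.volume_preserving_funUnique (Fin 1) ℝ).lintegral_comp hg
  have hpt : ∀ t : Fin 1 → ℝ,
      (cube 1).indicator
        (fun t => (ENNReal.ofReal (⨅ j, t j)) ^ k * (ENNReal.ofReal (1 - ⨆ j, t j)) ^ m) t =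
      (Set.Ioc (0:ℝ) 1).indicator
        (fun s => (ENNReal.ofReal s) ^ k * (ENNReal.ofReal (1 - s)) ^ m)
        (MeasurableEquiv.funUnique (Fin 1) ℝ t) := by
    intro t
    have hiv : (⨅ j, t j) = t 0 := iInf_fin_one rfl t
    have hsv : (⨆ j, t j) = t 0 := iSup_fin_one rfl t
    have hmem : t ∈ cube 1 ↔ (MeasurableEquiv.funUnique (Fin 1) ℝ t) ∈ Set.Ioc (0:ℝ) 1 := by
      rw [mem_cube]
      constructor
      · intro h; exact h 0
      · intro h j; rwa [fin_one_eq_zero' rfl j]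
    by_cases h : t ∈ cube 1
    · rw [Set.indicator_of_mem h, Set.indicator_of_mem (hmem.1 h), hiv, hsv]; rfl
    · rw [Set.indicator_of_notMem h, Set.indicator_of_notMem (fun hc => h (hmem.2 hc))]
  refine (lintegral_congr hpt).trans (key.trans ?_)
  rw [lintegral_indicator measurableSet_Ioc, lint_beta]

end BoxSplineAux
namespace BoxSplineAux

lemma cube_facts {p : ℕ} {t : Fin (p+1) → ℝ} (h : t ∈ cube (p+1)) :
    0 < (⨅ j, t j) ∧ (⨅ j, t j) ≤ (⨆ j, t j) ∧ (⨆ j, t j) ≤ 1 := by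
  rw [mem_cube] at h
  exact ⟨(forall_gt_iff_inf t 0).1 fun j => (h j).1, iInf_le_iSup' t,
    ciSup_le fun j => (h j).2⟩

lemma Ffun_split (p k m : ℕ) :
    Ffun (p+1) k m = Ffun (p+1) (k+1) m + Ffun (p+1) k (m+1) + Mfun (p+1) k m := by
  rw [Ffun, Ffun, Ffun, Mfun, ← lintegral_add_left (meas_Fint p (k+1) m),
    ← lintegral_add_left ((meas_Fint p (k+1) m).fun_add (meas_Fint p k (m+1)))]
  refine lintegral_congr fun t => ?_
  by_cases h : t ∈ cube (p+1)
  · simp only [Set.indicator_of_mem h, Pi.add_apply]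
    obtain ⟨h1, h2, h3⟩ := cube_facts h
    have habc : ENNReal.ofReal (⨅ j, t j) + ENNReal.ofReal (1 - ⨆ j, t j)
        + ENNReal.ofReal ((⨆ j, t j) - ⨅ j, t j) = 1 := by
      rw [← ENNReal.ofReal_add h1.le (by linarith), ← ENNReal.ofReal_add (by linarith) (by linarith)]
      rw [show (⨅ j, t j) + (1 - ⨆ j, t j) + ((⨆ j, t j) - ⨅ j, t j) = (1:ℝ) by ring,
        ENNReal.ofReal_one]
    set a := ENNReal.ofReal (⨅ j, t j)
    set b := ENNReal.ofReal (1 - ⨆ j, t j)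
    set c := ENNReal.ofReal ((⨆ j, t j) - ⨅ j, t j)
    calc a^k * b^m = a^k * b^m * (a + b + c) := by rw [habc, mul_one]
    _ = a^(k+1)*b^m + a^k*b^(m+1) + c*(a^k*b^m) := by ring
  · simp only [Set.indicator_of_notMem h, Pi.add_apply, add_zero]

lemma inner_int (k m : ℕ) {A B : ℝ} (h1 : 0 < A) (h2 : A ≤ B) (h3 : B ≤ 1) :
    (∫⁻ s : ℝ, (Set.Ioc (0:ℝ) 1).indicator
      (fun s => (ENNReal.ofReal (min s A)) ^ k * (ENNReal.ofReal (1 - max s B)) ^ m) s) =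
    ENNReal.ofReal (1/((k:ℝ)+1)) * ((ENNReal.ofReal A) ^ (k+1) * (ENNReal.ofReal (1-B)) ^ m)
    + ENNReal.ofReal (B - A) * ((ENNReal.ofReal A) ^ k * (ENNReal.ofReal (1-B)) ^ m)
    + ENNReal.ofReal (1/((m:ℝ)+1)) * ((ENNReal.ofReal A) ^ k * (ENNReal.ofReal (1-B)) ^ (m+1)) := by
  rw [lintegral_indicator measurableSet_Ioc]
  have hsplit1 : Set.Ioc (0:ℝ) 1 = Set.Ioc 0 B ∪ Set.Ioc B 1 :=
    (Set.Ioc_union_Ioc_eq_Ioc (by linarith) h3).symm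
  have hsplit2 : Set.Ioc (0:ℝ) B = Set.Ioc 0 A ∪ Set.Ioc A B :=
    (Set.Ioc_union_Ioc_eq_Ioc h1.le h2).symm
  rw [hsplit1, lintegral_union measurableSet_Ioc (Set.Ioc_disjoint_Ioc_of_le le_rfl),
      hsplit2, lintegral_union measurableSet_Ioc (Set.Ioc_disjoint_Ioc_of_le le_rfl)]
  have P1 : (∫⁻ s in Set.Ioc (0:ℝ) A,
      (ENNReal.ofReal (min s A)) ^ k * (ENNReal.ofReal (1 - max s B)) ^ m) =
      ENNReal.ofReal (1/((k:ℝ)+1)) * ((ENNReal.ofReal A) ^ (k+1) * (ENNReal.ofReal (1-B)) ^ m) := by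
    have hc : ∀ᵐ s ∂(volume.restrict (Set.Ioc (0:ℝ) A)), True → True := by simp
    rw [setLIntegral_congr_fun measurableSet_Ioc
      ((fun s hs => by
        rw [min_eq_left hs.2, max_eq_right (hs.2.trans h2)]))]
    rw [lintegral_mul_const _ (ENNReal.measurable_ofReal.pow_const k), lint_pow_Ioc k h1.le]
    have hx : ENNReal.ofReal (A ^ (k+1) / ((k:ℕ)+1)) =
        ENNReal.ofReal (1/((k:ℝ)+1)) * ENNReal.ofReal A ^ (k+1) := by
      rw [← ENNReal.ofReal_pow h1.le,
        ← ENNReal.ofReal_mul (by positivity : (0:ℝ) ≤ 1/((k:ℝ)+1))]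
      congr 1
      push_cast
      ring
    rw [hx, mul_assoc]
  have P2 : (∫⁻ s in Set.Ioc A B,
      (ENNReal.ofReal (min s A)) ^ k * (ENNReal.ofReal (1 - max s B)) ^ m) =
      ENNReal.ofReal (B - A) * ((ENNReal.ofReal A) ^ k * (ENNReal.ofReal (1-B)) ^ m) := by
    rw [setLIntegral_congr_fun measurableSet_Ioc
      ((fun s hs => by
        rw [min_eq_right hs.1.le, max_eq_right hs.2]))]
    rw [setLIntegral_const, Real.volume_Ioc, mul_comm]
  have P3 : (∫⁻ s in Set.Ioc B 1,
      (ENNReal.ofReal (min s A)) ^ k * (ENNReal.ofReal (1 - max s B)) ^ m) =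
      ENNReal.ofReal (1/((m:ℝ)+1)) * ((ENNReal.ofReal A) ^ k * (ENNReal.ofReal (1-B)) ^ (m+1)) := by
    rw [setLIntegral_congr_fun measurableSet_Ioc
      ((fun s hs => by
        rw [min_eq_right (by linarith [hs.1]), max_eq_left hs.1.le]))]
    have hmeas : Measurable fun x : ℝ => ENNReal.ofReal (1 - x) ^ m :=
      ((ENNReal.measurable_ofReal.comp (measurable_const.sub measurable_id)).pow_const m)
    rw [lintegral_const_mul _ hmeas, lint_pow_one_sub_Ioc m h3]
    have hx : ENNReal.ofReal ((1 - B) ^ (m+1) / ((m:ℕ)+1)) =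
        ENNReal.ofReal (1/((m:ℝ)+1)) * ENNReal.ofReal (1-B) ^ (m+1) := by
      rw [← ENNReal.ofReal_pow (by linarith : (0:ℝ) ≤ 1 - B),
        ← ENNReal.ofReal_mul (by positivity : (0:ℝ) ≤ 1/((m:ℝ)+1))]
      congr 1
      push_cast
      ring
    rw [hx]
    ring
  rw [P1, P2, P3]

lemma Ffun_rec (p k m : ℕ) :
    Ffun (p+2) k m = ENNReal.ofReal (1/((k:ℝ)+1)) * Ffun (p+1) (k+1) m
      + Mfun (p+1) k m + ENNReal.ofReal (1/((m:ℝ)+1)) * Ffun (p+1) k (m+1) := by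
  classical
  set g : (Fin (p+2) → ℝ) → ENNReal := fun y => (cube (p+2)).indicator
    (fun y => (ENNReal.ofReal (⨅ j, y j)) ^ k * (ENNReal.ofReal (1 - ⨆ j, y j)) ^ m) y with hg_def
  have hg : Measurable g := meas_Fint (p+1) k m
  set T := MeasurableEquiv.piFinSuccAbove (fun _ : Fin (p+2) => ℝ) 0 with hT_def
  have mp := measurePreserving_piFinSuccAbove (fun _ : Fin (p+2) => (volume : Measure ℝ)) 0
  have h0 : Ffun (p+2) k m =
      ∫⁻ z : ℝ × (Fin (p+1) → ℝ), g (T.symm z)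
        ∂((volume : Measure ℝ).prod (Measure.pi fun _ : Fin (p+1) => (volume : Measure ℝ))) := by
    rw [Ffun]
    have hc := (MeasurePreserving.symm T mp).lintegral_comp hg
    rw [MeasureTheory.volume_pi]
    exact hc.symm
  have hTsymm : ∀ (s : ℝ) (t : Fin (p+1) → ℝ), T.symm (s, t) = Fin.cons s t := by
    intro s t
    show (Fin.insertNthEquiv (fun _ => ℝ) 0) (s, t) = Fin.cons s t
    rw [Fin.insertNthEquiv_zero]
    rfl
  have hpi : (Measure.pi fun _ : Fin (p+1) => (volume : Measure ℝ)) =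
      (volume : Measure (Fin (p+1) → ℝ)) := rfl
  have hmeas2 : Measurable fun z : ℝ × (Fin (p+1) → ℝ) => g (T.symm z) :=
    hg.comp T.symm.measurable
  rw [h0, hpi, lintegral_prod_symm _ hmeas2.aemeasurable]
  have hpt : ∀ t : Fin (p+1) → ℝ, (∫⁻ s : ℝ, g (T.symm (s, t))) =
      (cube (p+1)).indicator (fun t => ENNReal.ofReal (1/((k:ℝ)+1)) *
        ((ENNReal.ofReal (⨅ j, t j)) ^ (k+1) * (ENNReal.ofReal (1 - ⨆ j, t j)) ^ m)) t
      + (cube (p+1)).indicator (fun t => ENNReal.ofReal ((⨆ j, t j) - ⨅ j, t j) *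
        ((ENNReal.ofReal (⨅ j, t j)) ^ k * (ENNReal.ofReal (1 - ⨆ j, t j)) ^ m)) t
      + (cube (p+1)).indicator (fun t => ENNReal.ofReal (1/((m:ℝ)+1)) *
        ((ENNReal.ofReal (⨅ j, t j)) ^ k * (ENNReal.ofReal (1 - ⨆ j, t j)) ^ (m+1))) t := by
    intro t
    have hinf : ∀ s : ℝ, (⨅ j, (Fin.cons s t : Fin (p+2) → ℝ) j) = min s (⨅ j, t j) := by
      intro s
      rw [iInf_fin_succ (Fin.cons s t)]
      simp [Fin.tail_cons]
    have hsup : ∀ s : ℝ, (⨆ j, (Fin.cons s t : Fin (p+2) → ℝ) j) = max s (⨆ j, t j) := by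
      intro s
      rw [iSup_fin_succ (Fin.cons s t)]
      simp [Fin.tail_cons]
    have hmem : ∀ s : ℝ, ((Fin.cons s t : Fin (p+2) → ℝ) ∈ cube (p+2)) ↔
        (s ∈ Set.Ioc (0:ℝ) 1 ∧ t ∈ cube (p+1)) := by
      intro s
      rw [mem_cube, mem_cube]
      constructor
      · intro h
        refine ⟨by simpa using h 0, fun j => by simpa using h j.succ⟩
      · rintro ⟨hs, ht⟩ j
        refine Fin.cases ?_ (fun i => ?_) j
        · simpa using hs
        · simpa using ht i
    by_cases h : t ∈ cube (p+1)
    · obtain ⟨h1, h2, h3⟩ := cube_facts h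
      have hgs : ∀ s : ℝ, g (T.symm (s, t)) = (Set.Ioc (0:ℝ) 1).indicator
          (fun s => (ENNReal.ofReal (min s (⨅ j, t j))) ^ k *
            (ENNReal.ofReal (1 - max s (⨆ j, t j))) ^ m) s := by
        intro s
        simp only [hTsymm s t, hg_def]
        by_cases hs : s ∈ Set.Ioc (0:ℝ) 1
        · rw [Set.indicator_of_mem ((hmem s).2 ⟨hs, h⟩), Set.indicator_of_mem hs,
            hinf s, hsup s]
        · rw [Set.indicator_of_notMem (fun hc => hs ((hmem s).1 hc).1),
            Set.indicator_of_notMem hs]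
      rw [lintegral_congr hgs, inner_int k m h1 h2 h3,
        Set.indicator_of_mem h, Set.indicator_of_mem h, Set.indicator_of_mem h]
    · have hgs : ∀ s : ℝ, g (T.symm (s, t)) = 0 := by
        intro s
        simp only [hTsymm s t, hg_def]
        exact Set.indicator_of_notMem (fun hc => h ((hmem s).1 hc).2) _
      rw [lintegral_congr hgs, lintegral_zero, Set.indicator_of_notMem h,
        Set.indicator_of_notMem h, Set.indicator_of_notMem h]
      simp
  rw [lintegral_congr hpt]
  have hma : Measurable fun t : Fin (p+1) → ℝ =>
      (cube (p+1)).indicator (fun t => ENNReal.ofReal (1/((k:ℝ)+1)) *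
        ((ENNReal.ofReal (⨅ j, t j)) ^ (k+1) * (ENNReal.ofReal (1 - ⨆ j, t j)) ^ m)) t :=
    Measurable.indicator (measurable_const.mul
      (((ENNReal.measurable_ofReal.comp measurable_inf).pow_const (k+1)).mul
        ((ENNReal.measurable_ofReal.comp (measurable_const.sub measurable_sup)).pow_const m)))
      (measurable_cube _)
  have hmb : Measurable fun t : Fin (p+1) → ℝ =>
      (cube (p+1)).indicator (fun t => ENNReal.ofReal ((⨆ j, t j) - ⨅ j, t j) *
        ((ENNReal.ofReal (⨅ j, t j)) ^ k * (ENNReal.ofReal (1 - ⨆ j, t j)) ^ m)) t :=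
    meas_Mint p k m
  rw [lintegral_add_left (hma.fun_add hmb), lintegral_add_left hma]
  have hIa : (∫⁻ t : Fin (p+1) → ℝ,
      (cube (p+1)).indicator (fun t => ENNReal.ofReal (1/((k:ℝ)+1)) *
        ((ENNReal.ofReal (⨅ j, t j)) ^ (k+1) * (ENNReal.ofReal (1 - ⨆ j, t j)) ^ m)) t) =
      ENNReal.ofReal (1/((k:ℝ)+1)) * Ffun (p+1) (k+1) m := by
    rw [Ffun, ← lintegral_const_mul _ (meas_Fint p (k+1) m)]
    refine lintegral_congr fun t => ?_
    by_cases h : t ∈ cube (p+1)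
    · rw [Set.indicator_of_mem h, Set.indicator_of_mem h]
    · rw [Set.indicator_of_notMem h, Set.indicator_of_notMem h, mul_zero]
  have hIc : (∫⁻ t : Fin (p+1) → ℝ,
      (cube (p+1)).indicator (fun t => ENNReal.ofReal (1/((m:ℝ)+1)) *
        ((ENNReal.ofReal (⨅ j, t j)) ^ k * (ENNReal.ofReal (1 - ⨆ j, t j)) ^ (m+1))) t) =
      ENNReal.ofReal (1/((m:ℝ)+1)) * Ffun (p+1) k (m+1) := by
    rw [Ffun, ← lintegral_const_mul _ (meas_Fint p k (m+1))]
    refine lintegral_congr fun t => ?_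
    by_cases h : t ∈ cube (p+1)
    · rw [Set.indicator_of_mem h, Set.indicator_of_mem h]
    · rw [Set.indicator_of_notMem h, Set.indicator_of_notMem h, mul_zero]
  rw [hIa, hIc]
  rfl

end BoxSplineAux
namespace BoxSplineAux

lemma Ffun_val : ∀ (p k m : ℕ), Ffun (p+1) k m =
    ENNReal.ofReal ((Nat.factorial k : ℝ) * (Nat.factorial m) * (Nat.factorial (p+1)) /
      (Nat.factorial (k+m+p+1)))
  | 0, k, m => by
      rw [Ffun_one]
      norm_num [Nat.factorial_one]
  | (p+1), k, m => by
      have IH := fun k m => Ffun_val p k m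
      have hfacpos : ∀ n : ℕ, (0:ℝ) < Nat.factorial n := fun n => by
        exact_mod_cast Nat.factorial_pos n
      have hM : Mfun (p+1) k m = ENNReal.ofReal ((Nat.factorial k : ℝ) * (Nat.factorial m) *
          (Nat.factorial (p+1)) * p / (Nat.factorial (k+m+p+2))) := by
        have hs := Ffun_split p k m
        rw [IH k m, IH (k+1) m, IH k (m+1)] at hs
        have key : ENNReal.ofReal ((Nat.factorial (k+1) : ℝ) * (Nat.factorial m) *
              (Nat.factorial (p+1)) / (Nat.factorial (k+1+m+p+1)))
            + ENNReal.ofReal ((Nat.factorial k : ℝ) * (Nat.factorial (m+1)) *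
              (Nat.factorial (p+1)) / (Nat.factorial (k+(m+1)+p+1)))
            + ENNReal.ofReal ((Nat.factorial k : ℝ) * (Nat.factorial m) *
              (Nat.factorial (p+1)) * p / (Nat.factorial (k+m+p+2)))
            = ENNReal.ofReal ((Nat.factorial k : ℝ) * (Nat.factorial m) *
              (Nat.factorial (p+1)) / (Nat.factorial (k+m+p+1))) := by
          rw [← ENNReal.ofReal_add (by positivity) (by positivity),
            ← ENNReal.ofReal_add (by positivity) (by positivity)]
          congr 1
          rw [show k+1+m+p+1 = (k+m+p+1)+1 by omega, show k+(m+1)+p+1 = (k+m+p+1)+1 by omega,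
            show k+m+p+2 = (k+m+p+1)+1 by omega, Nat.factorial_succ (k+m+p+1),
            Nat.factorial_succ k, Nat.factorial_succ m]
          have h1 := hfacpos (k+m+p+1)
          push_cast
          field_simp
          ring
        rw [← key] at hs
        have hfin : ENNReal.ofReal ((Nat.factorial (k+1) : ℝ) * (Nat.factorial m) *
              (Nat.factorial (p+1)) / (Nat.factorial (k+1+m+p+1)))
            + ENNReal.ofReal ((Nat.factorial k : ℝ) * (Nat.factorial (m+1)) *
              (Nat.factorial (p+1)) / (Nat.factorial (k+(m+1)+p+1))) ≠ ⊤ :=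
          ENNReal.add_ne_top.2 ⟨ENNReal.ofReal_ne_top, ENNReal.ofReal_ne_top⟩
        exact ((ENNReal.add_right_inj hfin).1 hs).symm
      rw [Ffun_rec p k m, IH (k+1) m, IH k (m+1), hM]
      rw [← ENNReal.ofReal_mul (by positivity : (0:ℝ) ≤ 1/((k:ℝ)+1)),
        ← ENNReal.ofReal_mul (by positivity : (0:ℝ) ≤ 1/((m:ℝ)+1)),
        ← ENNReal.ofReal_add (by positivity) (by positivity),
        ← ENNReal.ofReal_add (by positivity) (by positivity)]
      congr 1
      rw [show k+1+m+p+1 = (k+m+p+1)+1 by omega, show k+(m+1)+p+1 = (k+m+p+1)+1 by omega,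
        show k+m+p+2 = (k+m+p+1)+1 by omega, show k+m+(p+1)+1 = (k+m+p+1)+1 by omega,
        show p+1+1 = (p+1)+1 from rfl,
        Nat.factorial_succ (k+m+p+1), Nat.factorial_succ k, Nat.factorial_succ m,
        Nat.factorial_succ (p+1)]
      have h1 := hfacpos (k+m+p+1)
      have h2 := hfacpos (p+1)
      have hk1 : ((k:ℝ)+1) ≠ 0 := by positivity
      have hm1 : ((m:ℝ)+1) ≠ 0 := by positivity
      push_cast
      field_simp
      ring

end BoxSplineAux
namespace BoxSplineAux

lemma final_t_integral (d p : ℕ) :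
    (∫⁻ t : Fin (p+1) → ℝ,
      (Set.univ.pi fun _ : Fin (p+1) => Set.Ioc (0:ℝ) 1).indicator
        (fun t => (ENNReal.ofReal ((⨅ j, t j) + 1 - ⨆ j, t j)) ^ (d+1)) t) =
    ∑ k ∈ Finset.range (d+2), (((d+1).choose k : ℕ) : ENNReal) * Ffun (p+1) k (d+1-k) := by
  have hcube : (Set.univ.pi fun _ : Fin (p+1) => Set.Ioc (0:ℝ) 1) = cube (p+1) := rfl
  rw [hcube]
  have hpt : ∀ t : Fin (p+1) → ℝ,
      (cube (p+1)).indicator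
        (fun t => (ENNReal.ofReal ((⨅ j, t j) + 1 - ⨆ j, t j)) ^ (d+1)) t =
      ∑ k ∈ Finset.range (d+2), (cube (p+1)).indicator
        (fun t => (((d+1).choose k : ℕ) : ENNReal) *
          ((ENNReal.ofReal (⨅ j, t j)) ^ k * (ENNReal.ofReal (1 - ⨆ j, t j)) ^ (d+1-k))) t := by
    intro t
    by_cases h : t ∈ cube (p+1)
    · simp only [Set.indicator_of_mem h]
      obtain ⟨h1, h2, h3⟩ := cube_facts h
      rw [show (⨅ j, t j) + 1 - (⨆ j, t j) = (⨅ j, t j) + (1 - ⨆ j, t j) by ring,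
        ENNReal.ofReal_add h1.le (by linarith), add_pow]
      exact Finset.sum_congr rfl fun k _ => by ring
    · simp [Set.indicator_of_notMem h]
  have hms : ∀ k ∈ Finset.range (d+2), Measurable fun t : Fin (p+1) → ℝ =>
      (cube (p+1)).indicator (fun t => (((d+1).choose k : ℕ) : ENNReal) *
        ((ENNReal.ofReal (⨅ j, t j)) ^ k * (ENNReal.ofReal (1 - ⨆ j, t j)) ^ (d+1-k))) t :=
    fun k _ => Measurable.indicator (measurable_const.mul
      (((ENNReal.measurable_ofReal.comp measurable_inf).pow_const k).mul
        ((ENNReal.measurable_ofReal.comp (measurable_const.sub measurable_sup)).pow_const (d+1-k))))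
      (measurable_cube _)
  rw [lintegral_congr hpt, lintegral_finset_sum _ hms]
  refine Finset.sum_congr rfl fun k _ => ?_
  rw [Ffun, ← lintegral_const_mul _ (meas_Fint p k (d+1-k))]
  refine lintegral_congr fun t => ?_
  by_cases h : t ∈ cube (p+1)
  · rw [Set.indicator_of_mem h, Set.indicator_of_mem h]
  · rw [Set.indicator_of_notMem h, Set.indicator_of_notMem h, mul_zero]

lemma sum_value (d p : ℕ) :
    (∑ k ∈ Finset.range (d+2), (((d+1).choose k : ℕ) : ENNReal) * Ffun (p+1) k (d+1-k)) =
    ENNReal.ofReal (((d:ℝ)+2) * (Nat.factorial (d+1)) * (Nat.factorial (p+1)) /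
      (Nat.factorial (d+p+2))) := by
  have hterm : ∀ k ∈ Finset.range (d+2), (((d+1).choose k : ℕ) : ENNReal) * Ffun (p+1) k (d+1-k)
      = ENNReal.ofReal ((Nat.factorial (d+1) : ℝ) * (Nat.factorial (p+1)) /
          (Nat.factorial (d+p+2))) := by
    intro k hk
    have hkle : k ≤ d+1 := Nat.lt_succ_iff.1 (Finset.mem_range.1 hk)
    rw [Ffun_val p k (d+1-k), show k+(d+1-k)+p+1 = d+p+2 by omega,
      ← ENNReal.ofReal_natCast ((d+1).choose k), ← ENNReal.ofReal_mul (by positivity)]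
    congr 1
    have hch : ((d+1).choose k) * (Nat.factorial k) * (Nat.factorial (d+1-k)) =
        Nat.factorial (d+1) := Nat.choose_mul_factorial_mul_factorial hkle
    have hc := congrArg (fun n : ℕ => (n : ℝ)) hch
    push_cast at hc
    rw [← hc]
    ring
  rw [Finset.sum_congr rfl hterm, Finset.sum_const, Finset.card_range, nsmul_eq_mul,
    ← ENNReal.ofReal_natCast (d+2), ← ENNReal.ofReal_mul (by positivity)]
  congr 1
  push_cast
  ring

lemma final_real (e q : ℕ) :
    ((e:ℝ)+2) * (Nat.factorial (e+1)) * (Nat.factorial (q+1)) / (Nat.factorial (e+q+2)) =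
    (((e+1 : ℕ) : ℝ) + 1) * ((((q+1) + (e+1)).choose (e+1) : ℝ))⁻¹ := by
  have hch := Nat.choose_mul_factorial_mul_factorial (show e+1 ≤ (q+1)+(e+1) by omega)
  rw [show (q+1)+(e+1)-(e+1) = q+1 by omega] at hch
  have hcast := congrArg (fun n : ℕ => (n : ℝ)) hch
  push_cast at hcast
  have h1 : (0:ℝ) < Nat.factorial (e+1) := by exact_mod_cast Nat.factorial_pos _
  have h2 : (0:ℝ) < Nat.factorial (q+1) := by exact_mod_cast Nat.factorial_pos _
  have h3 : (0:ℝ) < (((q+1)+(e+1)).choose (e+1) : ℝ) := by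
    exact_mod_cast Nat.choose_pos (show e+1 ≤ (q+1)+(e+1) by omega)
  rw [show e+q+2 = (q+1)+(e+1) by omega, ← hcast]
  push_cast
  field_simp
  ring

end BoxSplineAux

end

open BoxSplineAux

/-- `∫_{ℝ^d} D(x)^p dx = (d+1)·C(p+d,d)⁻¹` for every `p ≥ 1`; in particular
`∫ D = 1` and `∫ D² = 2/(d+2)`. -/
theorem boxSpline_integral_pow (d : ℕ) (hd : 1 ≤ d) :
    (∀ p : ℕ, 1 ≤ p →
      ∫ x : Fin d → ℝ, (boxSplineD d x) ^ p = (d + 1) * (((p + d).choose d : ℝ))⁻¹) ∧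
    (∫ x : Fin d → ℝ, boxSplineD d x) = 1 ∧
    (∫ x : Fin d → ℝ, (boxSplineD d x) ^ 2) = 2 / (d + 2) := by
  obtain ⟨e, rfl⟩ : ∃ e, d = e + 1 := ⟨d - 1, by omega⟩
  have main : ∀ q : ℕ, ∫ x : Fin (e+1) → ℝ, (boxSplineD (e+1) x) ^ (q+1) =
      (((e+1 : ℕ) : ℝ) + 1) * ((((q+1) + (e+1)).choose (e+1) : ℝ))⁻¹ := by
    intro q
    have hDmeas : Measurable (boxSplineD (e+1)) := by
      have h : boxSplineD (e+1) = fun x => max 0 (min (⨅ i, x i) 1 - max ((⨆ i, x i) - 1) 0) :=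
        funext fun x => boxSplineD_eq e x
      rw [h]
      exact measurable_const.max
        ((measurable_inf.min measurable_const).sub
          ((measurable_sup.sub measurable_const).max measurable_const))
    have hint := MeasureTheory.integral_eq_lintegral_of_nonneg_ae
      (μ := (volume : MeasureTheory.Measure (Fin (e+1) → ℝ)))
      (f := fun x => (boxSplineD (e+1) x) ^ (q+1))
      (Filter.Eventually.of_forall fun x => pow_nonneg (boxSplineD_nonneg e x) _)
      ((hDmeas.pow_const (q+1)).aestronglyMeasurable)
    rw [hint]
    have hOR : ∀ x, ENNReal.ofReal ((boxSplineD (e+1) x) ^ (q+1)) =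
        (ENNReal.ofReal (boxSplineD (e+1) x)) ^ (q+1) :=
      fun x => ENNReal.ofReal_pow (boxSplineD_nonneg e x) _
    rw [lintegral_congr hOR, S_eq e q, final_t_integral e q, sum_value e q,
      ENNReal.toReal_ofReal (by positivity), final_real e q]
  refine ⟨?_, ?_, ?_⟩
  · intro p hp
    obtain ⟨q, rfl⟩ : ∃ q, p = q + 1 := ⟨p - 1, by omega⟩
    exact main q
  · have h := main 0
    simp only [zero_add, pow_one] at h
    rw [show 1+(e+1) = (e+1)+1 by omega, Nat.choose_succ_self_right] at h
    rw [h]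
    have h2 : ((e:ℝ)+2) ≠ 0 := by positivity
    push_cast
    field_simp
  · have h := main 1
    rw [show 1+1+(e+1) = e+3 by omega] at h
    rw [h]
    have hch := Nat.choose_mul_factorial_mul_factorial (show e+1 ≤ e+3 by omega)
    rw [show e+3-(e+1) = 2 by omega] at hch
    have h1 : (0:ℝ) < Nat.factorial (e+1) := by exact_mod_cast Nat.factorial_pos _
    have hf3 : ((Nat.factorial (e+3) : ℕ) : ℝ) = ((e:ℝ)+3)*((e:ℝ)+2)*(Nat.factorial (e+1)) := by
      rw [show e+3 = (e+2)+1 by omega, Nat.factorial_succ (e+2),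
        show e+2 = (e+1)+1 by omega, Nat.factorial_succ (e+1)]
      push_cast
      ring
    have hcast : (((e+3).choose (e+1) : ℕ) : ℝ) * (Nat.factorial (e+1)) * 2 =
        ((e:ℝ)+3)*((e:ℝ)+2)*(Nat.factorial (e+1)) := by
      have hc := congrArg (fun n : ℕ => (n : ℝ)) hch
      push_cast at hc
      norm_num [Nat.factorial_two] at hc
      rw [hf3] at hc
      linear_combination hc
    have hC : (((e+3).choose (e+1) : ℕ) : ℝ) = (((e:ℝ)+3)*((e:ℝ)+2))/2 := by
      have h6 : ((((e+3).choose (e+1) : ℕ) : ℝ) * 2) * ((Nat.factorial (e+1) : ℕ) : ℝ)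
          = ((((e:ℝ)+3)*((e:ℝ)+2))) * ((Nat.factorial (e+1) : ℕ) : ℝ) := by
        linear_combination hcast
      have h7 := mul_right_cancel₀ h1.ne' h6
      linarith
    rw [hC]
    have h4 : ((e:ℝ)+3) ≠ 0 := by positivity
    have h5 : ((e:ℝ)+2) ≠ 0 := by positivity
    push_cast
    field_simp
    ring
end

section
/- Let d ≥ 1 and let D : ℝ^d → ℝ be the Cartesian linear box spline. For every ω ∈ ℝ^d such that ω_k ≠ 0 for all 1 ≤ k ≤ d and ω_1 + ⋯ + ω_d ≠ 0, the Fourier transform of D satisfies ∫_{ℝ^d} D(x) e^{−i⟨ω, x⟩} dx = (Π_{k=1}^{d} (1 − e^{−i ω_k})/(i ω_k)) · (1 − e^{−i σ})/(i σ), where σ = ω_1 + ⋯ + ω_d. -/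
open MeasureTheory Complex

lemma bs_prod_sub {d : ℕ} (g : Fin d → Fin 2 → ℝ) :
    ∑ ε : Fin d → Fin 2, (-1:ℝ)^(∑ i, (ε i : ℕ)) * ∏ i, g i (ε i)
      = ∏ i, (g i 0 - g i 1) := by
  have h : ∀ i, g i 0 - g i 1 = ∑ e : Fin 2, (-1:ℝ)^(e:ℕ) * g i e := by
    intro i; rw [Fin.sum_univ_two]; norm_num; ring
  simp_rw [h]
  rw [Fintype.prod_sum]
  refine Finset.sum_congr rfl fun ε _ => ?_
  rw [Finset.prod_mul_distrib, Finset.prod_pow_eq_pow_sum]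

lemma bs_inf_sub {d : ℕ} [Nonempty (Fin d)] (f : Fin d → ℝ) (c : ℝ) :
    ⨅ i, (f i - c) = (⨅ i, f i) - c := by
  rw [← Finset.inf'_univ_eq_ciInf, ← Finset.inf'_univ_eq_ciInf]
  apply le_antisymm
  · obtain ⟨j, _, hj⟩ := Finset.exists_mem_eq_inf' Finset.univ_nonempty f
    rw [hj]
    exact Finset.inf'_le _ (Finset.mem_univ j)
  · apply Finset.le_inf'
    intro b _
    exact sub_le_sub_right (Finset.inf'_le _ (Finset.mem_univ b)) c

lemma bs_lt_inf {d : ℕ} [Nonempty (Fin d)] (f : Fin d → ℝ) (t : ℝ) :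
    t < (⨅ i, f i) ↔ ∀ i, t < f i := by
  rw [← Finset.inf'_univ_eq_ciInf, Finset.lt_inf'_iff]
  simp

lemma bs_clamp (y : ℝ) :
    ∫ t in Set.Ioc (0:ℝ) 1, (if t < y then (1:ℝ) else 0) = max 0 y - max 0 (y-1) := by
  have : (fun t => if t < y then (1:ℝ) else 0) = Set.indicator (Set.Iio y) (fun _ => (1:ℝ)) := by
    funext t; simp [Set.indicator_apply]
  rw [this, integral_indicator measurableSet_Iio, setIntegral_const, smul_eq_mul, mul_one,
    measureReal_def, Measure.restrict_apply measurableSet_Iio]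
  rcases le_or_gt y 0 with hy | hy
  · have : Set.Iio y ∩ Set.Ioc 0 1 = ∅ := by
      ext t; simp only [Set.mem_inter_iff, Set.mem_Iio, Set.mem_Ioc, Set.mem_empty_iff_false]
      constructor
      · rintro ⟨h1, h2, _⟩; linarith
      · exact False.elim
    rw [this]
    simp
    rw [max_eq_left hy, max_eq_left (by linarith)]
    ring
  · rcases le_or_gt y 1 with hy1 | hy1
    · have : Set.Iio y ∩ Set.Ioc 0 1 = Set.Ioo 0 y := by
        ext t; simp only [Set.mem_inter_iff, Set.mem_Iio, Set.mem_Ioc, Set.mem_Ioo]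
        constructor
        · rintro ⟨h1, h2, _⟩; exact ⟨h2, h1⟩
        · rintro ⟨h1, h2⟩; exact ⟨h2, h1, by linarith⟩
      rw [this, Real.volume_Ioo]
      rw [max_eq_right hy.le, max_eq_left (by linarith)]
      simp [ENNReal.toReal_ofReal hy.le]
    · have : Set.Iio y ∩ Set.Ioc 0 1 = Set.Ioc 0 1 := by
        ext t; simp only [Set.mem_inter_iff, Set.mem_Iio, Set.mem_Ioc]
        constructor
        · rintro ⟨_, h⟩; exact h
        · rintro ⟨h1, h2⟩; exact ⟨by linarith, h1, h2⟩
      rw [this, Real.volume_Ioc]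
      rw [max_eq_right (by linarith), max_eq_right (by linarith)]
      norm_num

lemma bs_split {d : ℕ} [Nonempty (Fin d)] (x : Fin d → ℝ) :
    boxSplineD d x = ∑ ε : Fin d → Fin 2, (-1:ℝ)^(∑ i, (ε i : ℕ)) *
      (max 0 (⨅ i, (x i - ((ε i : ℕ):ℝ))) - max 0 ((⨅ i, (x i - ((ε i : ℕ):ℝ))) - 1)) := by
  have hsub : ∀ (ε : Fin d → Fin 2), ⨅ i, (x i - ((ε i : ℕ):ℝ) - 1)
      = (⨅ i, (x i - ((ε i : ℕ):ℝ))) - 1 :=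
    fun ε => bs_inf_sub (fun i => x i - ((ε i : ℕ):ℝ)) 1
  unfold boxSplineD
  rw [← Equiv.sum_comp (Fin.snocEquiv (fun _ : Fin (d+1) => Fin 2))]
  simp only [Fin.snocEquiv_apply, Fin.snoc_castSucc, Fin.snoc_last, Fin.sum_univ_castSucc]
  rw [Fintype.sum_prod_type_right]
  refine Finset.sum_congr rfl fun ε _ => ?_
  rw [Fin.sum_univ_two]
  simp only [Fin.val_zero, Fin.val_one, Nat.cast_zero, Nat.cast_one, sub_zero,
    add_zero, pow_succ, hsub]
  ring

lemma bs_eq_integral {d : ℕ} [Nonempty (Fin d)] (x : Fin d → ℝ) :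
    boxSplineD d x
      = ∫ t in Set.Ioc (0:ℝ) 1, ∏ i, (if t < x i ∧ x i ≤ t + 1 then (1:ℝ) else 0) := by
  rw [bs_split]
  have hint : ∀ (ε : Fin d → Fin 2), Integrable
      (fun t => (-1:ℝ)^(∑ i, (ε i : ℕ)) * (if t < ⨅ i, (x i - ((ε i : ℕ):ℝ)) then (1:ℝ) else 0))
      (volume.restrict (Set.Ioc (0:ℝ) 1)) := by
    intro ε
    apply Integrable.const_mul
    have h : (fun t => if t < ⨅ i, (x i - ((ε i:ℕ):ℝ)) then (1:ℝ) else 0)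
        = Set.indicator (Set.Iio (⨅ i, (x i - ((ε i:ℕ):ℝ)))) (fun _ => (1:ℝ)) := by
      funext t; simp [Set.indicator_apply]
    rw [h]
    exact (integrable_const 1).indicator measurableSet_Iio
  simp_rw [← bs_clamp, ← integral_const_mul]
  rw [← integral_finset_sum _ fun ε _ => hint ε]
  refine integral_congr_ae (Filter.Eventually.of_forall fun t => ?_)
  have h1 : ∀ ε : Fin d → Fin 2, (if t < ⨅ i, (x i - ((ε i:ℕ):ℝ)) then (1:ℝ) else 0)
      = ∏ i, if t < x i - ((ε i:ℕ):ℝ) then (1:ℝ) else 0 := by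
    intro ε
    rw [Fintype.prod_boole]
    rw [if_congr (bs_lt_inf (fun i => x i - ((ε i:ℕ):ℝ)) t) rfl rfl]
    convert rfl using 2
  simp_rw [h1]
  rw [bs_prod_sub (fun i e => if t < x i - ((e:ℕ):ℝ) then (1:ℝ) else 0)]
  refine Finset.prod_congr rfl fun i _ => ?_
  simp only [Fin.val_zero, Nat.cast_zero, sub_zero, Fin.val_one, Nat.cast_one]
  by_cases ha : t < x i <;> by_cases hb : t < x i - 1
  · rw [if_pos ha, if_pos hb, if_neg (by push_neg; intro _; linarith)]; ring
  · rw [if_pos ha, if_neg hb, if_pos ⟨ha, by linarith⟩]; ring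
  · exact absurd (by linarith : t < x i) ha
  · rw [if_neg ha, if_neg hb, if_neg (fun h => ha h.1)]; ring


lemma bs_oneD {w : ℝ} (hw : w ≠ 0) (t : ℝ) :
    ∫ s : ℝ, (if t < s ∧ s ≤ t + 1 then (1:ℂ) else 0) * Complex.exp (-Complex.I * w * s)
      = Complex.exp (-Complex.I * w * t) *
          ((1 - Complex.exp (-Complex.I * w)) / (Complex.I * w)) := by
  have hc : (-Complex.I * (w:ℂ)) ≠ 0 :=
    mul_ne_zero (neg_ne_zero.mpr Complex.I_ne_zero) (Complex.ofReal_ne_zero.mpr hw)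
  have h1 : (fun s : ℝ => (if t < s ∧ s ≤ t + 1 then (1:ℂ) else 0) * Complex.exp (-Complex.I * w * s))
      = Set.indicator (Set.Ioc t (t+1)) (fun s : ℝ => Complex.exp (-Complex.I * w * s)) := by
    funext s
    by_cases h : t < s ∧ s ≤ t + 1 <;> simp [Set.indicator_apply, Set.mem_Ioc, h]
  rw [h1, integral_indicator measurableSet_Ioc,
    ← intervalIntegral.integral_of_le (by linarith : t ≤ t + 1)]
  have h2 : ∀ s : ℝ, -Complex.I * w * s = (-Complex.I * w) * (s : ℂ) := fun s => by ring
  rw [show (fun s:ℝ => Complex.exp (-Complex.I * ↑w * ↑s)) = fun s:ℝ => Complex.exp ((-Complex.I * ↑w) * ↑s) from rfl]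
  rw [integral_exp_mul_complex hc]
  have h3 : Complex.exp (-Complex.I * w * ((t:ℝ)+1:ℝ)) =
      Complex.exp (-Complex.I * w * t) * Complex.exp (-Complex.I * w) := by
    rw [← Complex.exp_add]; push_cast; ring_nf
  push_cast at h3 ⊢
  rw [h3]
  field_simp
  ring

lemma bs_inner {d : ℕ} (ω : Fin d → ℝ) (hω : ∀ k, ω k ≠ 0) (t : ℝ) :
    ∫ x : Fin d → ℝ,
        (∏ i, (if t < x i ∧ x i ≤ t + 1 then (1:ℂ) else 0)) *
          Complex.exp (-Complex.I * (∑ k, (ω k : ℂ) * (x k : ℂ)))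
      = Complex.exp (-Complex.I * ((∑ k, ω k : ℝ) : ℂ) * t) *
          ∏ k, (1 - Complex.exp (-Complex.I * (ω k : ℂ))) / (Complex.I * (ω k : ℂ)) := by
  have h1 : ∀ x : Fin d → ℝ,
      (∏ i, (if t < x i ∧ x i ≤ t + 1 then (1:ℂ) else 0)) *
        Complex.exp (-Complex.I * (∑ k, (ω k : ℂ) * (x k : ℂ)))
      = ∏ i, ((if t < x i ∧ x i ≤ t + 1 then (1:ℂ) else 0) *
          Complex.exp (-Complex.I * (ω i : ℂ) * (x i : ℂ))) := by
    intro x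
    rw [Finset.mul_sum, Complex.exp_sum, ← Finset.prod_mul_distrib]
    congr 1; funext i; ring_nf
  simp_rw [h1]
  rw [integral_fintype_prod_volume_eq_prod (ι := Fin d)
    (f := fun i s => (if t < s ∧ s ≤ t + 1 then (1:ℂ) else 0) * Complex.exp (-Complex.I * (ω i : ℂ) * (s : ℂ)))]
  have h2 : ∀ k, (∫ s : ℝ, (if t < s ∧ s ≤ t + 1 then (1:ℂ) else 0) *
      Complex.exp (-Complex.I * (ω k : ℂ) * (s : ℂ)))
      = Complex.exp (-Complex.I * (ω k : ℂ) * t) *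
          ((1 - Complex.exp (-Complex.I * (ω k : ℂ))) / (Complex.I * (ω k : ℂ))) :=
    fun k => bs_oneD (hω k) t
  simp_rw [h2]
  rw [Finset.prod_mul_distrib, ← Complex.exp_sum]
  congr 2
  rw [← Finset.sum_mul, ← Finset.mul_sum]
  push_cast
  ring


lemma bs_integrable {d : ℕ} (ω : Fin d → ℝ) :
    Integrable (fun p : (Fin d → ℝ) × ℝ =>
      (∏ i, (if p.2 < p.1 i ∧ p.1 i ≤ p.2 + 1 then (1:ℂ) else 0)) *
        Complex.exp (-Complex.I * (∑ k, (ω k : ℂ) * (p.1 k : ℂ))))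
      ((volume : Measure (Fin d → ℝ)).prod (volume.restrict (Set.Ioc (0:ℝ) 1))) := by
  set A : Set ((Fin d → ℝ) × ℝ) :=
    (Set.univ.pi fun _ : Fin d => Set.Ioc (0:ℝ) 2) ×ˢ (Set.univ : Set ℝ) with hA_def
  have hA : MeasurableSet A :=
    (MeasurableSet.univ_pi fun _ => measurableSet_Ioc).prod MeasurableSet.univ
  have hmeas : Measurable (fun p : (Fin d → ℝ) × ℝ =>
      (∏ i, (if p.2 < p.1 i ∧ p.1 i ≤ p.2 + 1 then (1:ℂ) else 0)) *
        Complex.exp (-Complex.I * (∑ k, (ω k : ℂ) * (p.1 k : ℂ)))) := by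
    have hxi : ∀ i : Fin d, Measurable fun p : (Fin d → ℝ) × ℝ => p.1 i :=
      fun i => (measurable_pi_apply i).comp measurable_fst
    apply Measurable.mul
    · apply Finset.measurable_prod
      intro i _
      refine Measurable.ite ?_ measurable_const measurable_const
      have : {p : (Fin d → ℝ) × ℝ | p.2 < p.1 i ∧ p.1 i ≤ p.2 + 1}
          = {p : (Fin d → ℝ) × ℝ | p.2 < p.1 i} ∩ {p : (Fin d → ℝ) × ℝ | p.1 i ≤ p.2 + 1} := rfl
      rw [this]
      exact (measurableSet_lt measurable_snd (hxi i)).inter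
        (measurableSet_le (hxi i) (measurable_snd.add_const 1))
    · exact Complex.measurable_exp.comp (measurable_const.mul
        (Finset.measurable_sum _ fun k _ =>
          ((Complex.measurable_ofReal.comp (hxi k)).const_mul _)))
  have hgint : Integrable (A.indicator fun _ => (1:ℝ))
      ((volume : Measure (Fin d → ℝ)).prod (volume.restrict (Set.Ioc (0:ℝ) 1))) := by
    rw [integrable_indicator_iff hA]
    refine (integrableOn_const_iff).mpr (Or.inr ?_)
    rw [hA_def, Measure.prod_prod, volume_pi_pi, Measure.restrict_apply_univ]
    simp only [Real.volume_Ioc]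
    refine ENNReal.mul_lt_top ?_ ?_
    · exact ENNReal.prod_lt_top fun _ _ => ENNReal.ofReal_lt_top
    · exact ENNReal.ofReal_lt_top
  refine Integrable.mono' hgint hmeas.aestronglyMeasurable ?_
  have hae : ∀ᵐ p : (Fin d → ℝ) × ℝ
      ∂((volume : Measure (Fin d → ℝ)).prod (volume.restrict (Set.Ioc (0:ℝ) 1))),
      p.2 ∈ Set.Ioc (0:ℝ) 1 := by
    rw [ae_iff]
    have hset : {p : (Fin d → ℝ) × ℝ | ¬ p.2 ∈ Set.Ioc (0:ℝ) 1}
        = (Set.univ : Set (Fin d → ℝ)) ×ˢ (Set.Ioc (0:ℝ) 1)ᶜ := by ext p; simp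
    rw [hset, Measure.prod_prod, Measure.restrict_apply measurableSet_Ioc.compl,
      Set.compl_inter_self, measure_empty, mul_zero]
  filter_upwards [hae] with p hp
  rw [norm_mul]
  have hnexp : ‖Complex.exp (-Complex.I * (∑ k, (ω k:ℂ) * (p.1 k:ℂ)))‖ = 1 := by
    have h : (∑ k, (ω k:ℂ) * (p.1 k:ℂ)) = ((∑ k, ω k * p.1 k : ℝ) : ℂ) := by push_cast; rfl
    rw [h, Complex.norm_exp]
    simp
  rw [hnexp, mul_one]
  by_cases hx : p.1 ∈ Set.univ.pi fun _ : Fin d => Set.Ioc (0:ℝ) 2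
  · rw [Set.indicator_of_mem (by exact ⟨hx, Set.mem_univ _⟩)]
    rw [norm_prod]
    refine Finset.prod_le_one (fun _ _ => norm_nonneg _) ?_
    intro i _
    by_cases h : p.2 < p.1 i ∧ p.1 i ≤ p.2 + 1 <;> simp [h]
  · rw [Set.indicator_of_notMem (fun hmem => hx hmem.1)]
    have hex : ∃ i, p.1 i ∉ Set.Ioc (0:ℝ) 2 := by
      by_contra hcon
      push_neg at hcon
      exact hx fun i _ => hcon i
    obtain ⟨i, hi⟩ := hex
    have hz : (if p.2 < p.1 i ∧ p.1 i ≤ p.2 + 1 then (1:ℂ) else 0) = 0 := by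
      rw [if_neg]
      rintro ⟨h1, h2⟩
      exact hi ⟨by linarith [hp.1], by linarith [hp.2]⟩
    rw [Finset.prod_eq_zero (Finset.mem_univ i) hz, norm_zero]


/-- the Fourier transform of the Cartesian linear box spline is
`Π_{k=1}^{d} (1−e^{−iω_k})/(iω_k) · (1−e^{−iσ})/(iσ)` with `σ = ω_1 + ⋯ + ω_d`, for every
`ω` with nonzero coordinates and nonzero coordinate sum. -/
theorem boxSpline_fourier_transform (d : ℕ) (hd : 1 ≤ d) (ω : Fin d → ℝ)
    (hω : ∀ k, ω k ≠ 0) (hσ : (∑ k, ω k) ≠ 0) :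
    ∫ x : Fin d → ℝ,
        (boxSplineD d x : ℂ) * Complex.exp (-Complex.I * (∑ k, (ω k : ℂ) * (x k : ℂ))) =
      (∏ k, (1 - Complex.exp (-Complex.I * (ω k : ℂ))) / (Complex.I * (ω k : ℂ))) *
        ((1 - Complex.exp (-Complex.I * ((∑ k, ω k : ℝ) : ℂ))) /
          (Complex.I * ((∑ k, ω k : ℝ) : ℂ))) := by
  haveI : Nonempty (Fin d) := ⟨⟨0, hd⟩⟩
  have hx : ∀ x : Fin d → ℝ,
      (boxSplineD d x : ℂ) * Complex.exp (-Complex.I * (∑ k, (ω k : ℂ) * (x k : ℂ)))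
      = ∫ t in Set.Ioc (0:ℝ) 1,
          (∏ i, (if t < x i ∧ x i ≤ t + 1 then (1:ℂ) else 0)) *
            Complex.exp (-Complex.I * (∑ k, (ω k : ℂ) * (x k : ℂ))) := by
    intro x
    rw [bs_eq_integral x]
    rw [show ((∫ t in Set.Ioc (0:ℝ) 1, ∏ i, (if t < x i ∧ x i ≤ t + 1 then (1:ℝ) else 0) : ℝ) : ℂ)
        = ∫ t in Set.Ioc (0:ℝ) 1,
            ((∏ i, (if t < x i ∧ x i ≤ t + 1 then (1:ℝ) else 0) : ℝ) : ℂ) from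
      (integral_ofReal (𝕜 := ℂ)).symm]
    rw [← integral_mul_const]
    refine integral_congr_ae (Filter.Eventually.of_forall fun t => ?_)
    push_cast [apply_ite Complex.ofReal]
    rfl
  simp_rw [hx]
  rw [integral_integral_swap (bs_integrable ω)]
  simp_rw [bs_inner ω hω]
  rw [integral_mul_const, ← intervalIntegral.integral_of_le (zero_le_one' ℝ),
    integral_exp_mul_complex (mul_ne_zero (neg_ne_zero.mpr Complex.I_ne_zero)
      (Complex.ofReal_ne_zero.mpr hσ))]
  have hc : (Complex.I * ((∑ k, ω k : ℝ) : ℂ)) ≠ 0 :=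
    mul_ne_zero Complex.I_ne_zero (Complex.ofReal_ne_zero.mpr hσ)
  rw [Complex.ofReal_zero, mul_zero, Complex.exp_zero, Complex.ofReal_one, mul_one]
  field_simp
  ring
end

section
/- Let d ≥ 1 and let D : ℝ^d → ℝ be the Cartesian linear box spline. Then for every x ∈ ℝ^d, the set {k ∈ ℤ^d : D(x − k) ≠ 0} has at most d+1 elements. -/
private lemma fin2_cases : ∀ v : Fin 2, v = 0 ∨ v = 1 := by decide

private lemma fin2_add_one_ne : ∀ v : Fin 2, v + 1 ≠ v := by decide

private lemma fin2_add_one_add_one : ∀ v : Fin 2, v + 1 + 1 = v := by decide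

private lemma val2_nonneg (v : Fin 2) : (0 : ℝ) ≤ ((v : ℕ) : ℝ) := Nat.cast_nonneg _

private lemma val2_le_one (v : Fin 2) : ((v : ℕ) : ℝ) ≤ 1 := by
  exact_mod_cast Nat.lt_succ_iff.mp v.isLt

/-- Flipping one coordinate of `ε` flips the sign `(-1)^{|ε|}`. -/
private lemma sign_flip {n : ℕ} (ε : Fin n → Fin 2) (p : Fin n) :
    (-1 : ℝ) ^ (∑ k, ((Function.update ε p (ε p + 1)) k : ℕ)) =
      -((-1 : ℝ) ^ (∑ k, (ε k : ℕ))) := by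
  rw [Finset.sum_eq_add_sum_sdiff_singleton_of_mem (Finset.mem_univ p)
      (fun k => ((Function.update ε p (ε p + 1) k : ℕ))),
    Finset.sum_eq_add_sum_sdiff_singleton_of_mem (Finset.mem_univ p) (fun k => ((ε k : ℕ)))]
  have hrest : ∑ k ∈ Finset.univ \ {p}, ((Function.update ε p (ε p + 1) k : ℕ)) =
      ∑ k ∈ Finset.univ \ {p}, ((ε k : ℕ)) := by
    refine Finset.sum_congr rfl fun k hk => ?_
    have hkp : k ≠ p := by
      have := (Finset.mem_sdiff.mp hk).2
      simpa using this
    rw [Function.update_of_ne hkp]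
  rw [hrest, Function.update_self]
  rcases fin2_cases (ε p) with h | h <;> rw [h] <;> simp [pow_add]

private lemma flip_involutive {n : ℕ} (ε : Fin n → Fin 2) (p : Fin n) :
    Function.update (Function.update ε p (ε p + 1)) p
      ((Function.update ε p (ε p + 1)) p + 1) = ε := by
  rw [Function.update_self, Function.update_idem, fin2_add_one_add_one,
    Function.update_eq_self]

private lemma flip_ne {n : ℕ} (ε : Fin n → Fin 2) (p : Fin n) :
    Function.update ε p (ε p + 1) ≠ ε := by
  intro h
  have := congrFun h p
  rw [Function.update_self] at this
  exact fin2_add_one_ne (ε p) this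

private lemma my_iInf_sub {ι : Type*} [Nonempty ι] [Finite ι] (f : ι → ℝ) (c : ℝ) :
    (⨅ i, (f i - c)) = (⨅ i, f i) - c := by
  have hb : BddBelow (Set.range f) := Finite.bddBelow_range f
  have hb' : BddBelow (Set.range fun i => f i - c) := Finite.bddBelow_range _
  apply le_antisymm
  · rw [le_sub_iff_add_le]
    refine le_ciInf fun i => ?_
    have := ciInf_le hb' i
    linarith
  · refine le_ciInf fun i => ?_
    have := ciInf_le hb i
    linarith

/-- If one entry of `f` is changed but some other entry `f j` dominates it (is `≤` it)
both before and after, the infimum is unchanged. -/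
private lemma iInf_congr_dominated {ι : Type*} [Nonempty ι] [Finite ι] (f f' : ι → ℝ)
    (i j : ι) (hij : j ≠ i) (hoff : ∀ k, k ≠ i → f k = f' k)
    (h1 : f j ≤ f i) (h2 : f' j ≤ f' i) : (⨅ k, f k) = ⨅ k, f' k := by
  have hb : BddBelow (Set.range f) := Finite.bddBelow_range f
  have hb' : BddBelow (Set.range f') := Finite.bddBelow_range f'
  apply le_antisymm
  · refine le_ciInf fun k => ?_
    rcases eq_or_ne k i with rfl | hk
    · exact ((ciInf_le hb j).trans_eq (hoff j hij)).trans h2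
    · exact (ciInf_le hb k).trans_eq (hoff k hk)
  · refine le_ciInf fun k => ?_
    rcases eq_or_ne k i with rfl | hk
    · exact ((ciInf_le hb' j).trans_eq (hoff j hij).symm).trans h1
    · exact (ciInf_le hb' k).trans_eq (hoff k hk).symm

/-- If one entry of `f` is changed but that entry is nonnegative both before and after,
then `max 0 (-⨅ f)` is unchanged. -/
private lemma max_neg_iInf_congr {ι : Type*} [Nonempty ι] [Finite ι] (f f' : ι → ℝ) (i : ι)
    (hoff : ∀ k, k ≠ i → f k = f' k) (h1 : 0 ≤ f i) (h2 : 0 ≤ f' i) :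
    max 0 (-⨅ k, f k) = max 0 (-⨅ k, f' k) := by
  have key : ∀ (g g' : ι → ℝ), (∀ k, k ≠ i → g k = g' k) → 0 ≤ g i →
      max 0 (-⨅ k, g k) ≤ max 0 (-⨅ k, g' k) := by
    intro g g' hgg hg
    refine max_le (le_max_left _ _) ?_
    rw [neg_le]
    refine le_ciInf fun k => ?_
    rcases eq_or_ne k i with rfl | hk
    · have : -max 0 (-⨅ k, g' k) ≤ 0 := neg_nonpos.mpr (le_max_left _ _)
      linarith
    · have h3 : -max 0 (-⨅ k, g' k) ≤ ⨅ k, g' k := by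
        have := le_max_right 0 (-⨅ k, g' k); linarith
      exact h3.trans ((ciInf_le (Finite.bddBelow_range g') k).trans_eq (hgg k hk).symm)
  exact le_antisymm (key f f' hoff h1) (key f' f (fun k hk => (hoff k hk).symm) h2)

private lemma max_zero_eq (t : ℝ) : max 0 t = t + max 0 (-t) := by
  rcases le_total t 0 with h | h
  · rw [max_eq_left h, max_eq_right (by linarith : (0:ℝ) ≤ -t)]; ring
  · rw [max_eq_right h, max_eq_left (by linarith : -t ≤ (0:ℝ))]; ring

/-- If some coordinate is `≤ 0`, the box spline vanishes. -/
private lemma boxSplineD_eq_zero_of_nonpos {d : ℕ} (y : Fin d → ℝ) (i : Fin d)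
    (h : y i ≤ 0) : boxSplineD d y = 0 := by
  simp only [boxSplineD]
  refine Finset.sum_eq_zero fun ε _ => ?_
  have hb : BddBelow (Set.range fun k : Fin d =>
      y k - ((ε (Fin.castSucc k) : ℕ) : ℝ) - ((ε (Fin.last d) : ℕ) : ℝ)) :=
    Finite.bddBelow_range _
  have h1 : (⨅ k : Fin d,
      (y k - ((ε (Fin.castSucc k) : ℕ) : ℝ) - ((ε (Fin.last d) : ℕ) : ℝ))) ≤ 0 := by
    refine (ciInf_le hb i).trans ?_
    have a1 := val2_nonneg (ε (Fin.castSucc i))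
    have a2 := val2_nonneg (ε (Fin.last d))
    linarith
  rw [max_eq_left h1, mul_zero]

/-- If two coordinates differ by at least 1, the box spline vanishes. -/
private lemma boxSplineD_eq_zero_of_gap {d : ℕ} (y : Fin d → ℝ) (i j : Fin d)
    (hij : y j + 1 ≤ y i) : boxSplineD d y = 0 := by
  have hne : Nonempty (Fin d) := ⟨i⟩
  have hji : j ≠ i := by rintro rfl; linarith
  simp only [boxSplineD]
  refine Finset.sum_ninvolution
    (fun ε => Function.update ε (Fin.castSucc i) (ε (Fin.castSucc i) + 1))
    (fun ε => ?_) (fun ε _ => flip_ne ε _) (fun ε => Finset.mem_univ _)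
    (fun ε => flip_involutive ε _)
  · set p := Fin.castSucc i with hp
    set ε' : Fin (d+1) → Fin 2 := Function.update ε p (ε p + 1) with hε'
    have hlast : ε' (Fin.last d) = ε (Fin.last d) :=
      Function.update_of_ne (Fin.castSucc_lt_last i).ne' _ _
    have hoffc : ∀ k : Fin d, k ≠ i → ε' (Fin.castSucc k) = ε (Fin.castSucc k) := by
      intro k hk
      exact Function.update_of_ne (fun h => hk (Fin.castSucc_injective d h)) _ _
    have hinf : (⨅ k : Fin d,
          (y k - ((ε (Fin.castSucc k) : ℕ) : ℝ) - ((ε (Fin.last d) : ℕ) : ℝ))) =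
        ⨅ k : Fin d,
          (y k - ((ε' (Fin.castSucc k) : ℕ) : ℝ) - ((ε' (Fin.last d) : ℕ) : ℝ)) := by
      refine iInf_congr_dominated _ _ i j hji (fun k hk => by rw [hoffc k hk, hlast]) ?_ ?_
      · have b1 := val2_nonneg (ε (Fin.castSucc j))
        have b2 := val2_le_one (ε (Fin.castSucc i))
        have b3 := val2_nonneg (ε (Fin.castSucc i))
        linarith
      · have b1 := val2_nonneg (ε' (Fin.castSucc j))
        have b2 := val2_le_one (ε' (Fin.castSucc i))
        linarith
    have hsgn := sign_flip ε p
    rw [← hε'] at hsgn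
    rw [hsgn, ← hinf]
    ring

/-- If some coordinate is `≥ 2`, the box spline vanishes. -/
private lemma boxSplineD_eq_zero_of_ge_two {d : ℕ} (y : Fin d → ℝ) (i : Fin d)
    (h2 : 2 ≤ y i) : boxSplineD d y = 0 := by
  have hne : Nonempty (Fin d) := ⟨i⟩
  simp only [boxSplineD]
  have step1 : ∀ ε : Fin (d+1) → Fin 2,
      (-1 : ℝ) ^ (∑ k, (ε k : ℕ)) *
        max 0 (⨅ k : Fin d,
          (y k - ((ε (Fin.castSucc k) : ℕ) : ℝ) - ((ε (Fin.last d) : ℕ) : ℝ))) =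
      ((-1 : ℝ) ^ (∑ k, (ε k : ℕ)) *
          (⨅ k : Fin d, (y k - ((ε (Fin.castSucc k) : ℕ) : ℝ))) -
        (-1 : ℝ) ^ (∑ k, (ε k : ℕ)) * ((ε (Fin.last d) : ℕ) : ℝ)) +
      (-1 : ℝ) ^ (∑ k, (ε k : ℕ)) *
        max 0 (-⨅ k : Fin d,
          (y k - ((ε (Fin.castSucc k) : ℕ) : ℝ) - ((ε (Fin.last d) : ℕ) : ℝ))) := by
    intro ε
    rw [max_zero_eq (⨅ k : Fin d,
      (y k - ((ε (Fin.castSucc k) : ℕ) : ℝ) - ((ε (Fin.last d) : ℕ) : ℝ)))]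
    rw [my_iInf_sub (fun k : Fin d => y k - ((ε (Fin.castSucc k) : ℕ) : ℝ))
      (((ε (Fin.last d) : ℕ) : ℝ))]
    ring
  rw [Finset.sum_congr rfl fun ε _ => step1 ε]
  rw [Finset.sum_add_distrib, Finset.sum_sub_distrib]
  have inv1 : (∑ ε : Fin (d+1) → Fin 2, (-1 : ℝ) ^ (∑ k, (ε k : ℕ)) *
      (⨅ k : Fin d, (y k - ((ε (Fin.castSucc k) : ℕ) : ℝ)))) = 0 := by
    refine Finset.sum_ninvolution
      (fun ε => Function.update ε (Fin.last d) (ε (Fin.last d) + 1))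
      (fun ε => ?_) (fun ε _ => flip_ne ε _) (fun ε => Finset.mem_univ _)
      (fun ε => flip_involutive ε _)
    have hval : ∀ k : Fin d,
        (Function.update ε (Fin.last d) (ε (Fin.last d) + 1)) (Fin.castSucc k) =
          ε (Fin.castSucc k) := fun k =>
      Function.update_of_ne (Fin.castSucc_lt_last k).ne _ _
    rw [sign_flip ε (Fin.last d)]
    simp only [hval]
    ring
  have inv2 : (∑ ε : Fin (d+1) → Fin 2, (-1 : ℝ) ^ (∑ k, (ε k : ℕ)) *
      ((ε (Fin.last d) : ℕ) : ℝ)) = 0 := by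
    refine Finset.sum_ninvolution
      (fun ε => Function.update ε (Fin.castSucc i) (ε (Fin.castSucc i) + 1))
      (fun ε => ?_) (fun ε _ => flip_ne ε _) (fun ε => Finset.mem_univ _)
      (fun ε => flip_involutive ε _)
    have hlast : (Function.update ε (Fin.castSucc i) (ε (Fin.castSucc i) + 1))
        (Fin.last d) = ε (Fin.last d) :=
      Function.update_of_ne (Fin.castSucc_lt_last i).ne' _ _
    rw [sign_flip ε (Fin.castSucc i), hlast]
    ring
  have inv3 : (∑ ε : Fin (d+1) → Fin 2, (-1 : ℝ) ^ (∑ k, (ε k : ℕ)) *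
      max 0 (-⨅ k : Fin d,
        (y k - ((ε (Fin.castSucc k) : ℕ) : ℝ) - ((ε (Fin.last d) : ℕ) : ℝ)))) = 0 := by
    refine Finset.sum_ninvolution
      (fun ε => Function.update ε (Fin.castSucc i) (ε (Fin.castSucc i) + 1))
      (fun ε => ?_) (fun ε _ => flip_ne ε _) (fun ε => Finset.mem_univ _)
      (fun ε => flip_involutive ε _)
    set ε' : Fin (d+1) → Fin 2 :=
      Function.update ε (Fin.castSucc i) (ε (Fin.castSucc i) + 1) with hε'
    have hlast : ε' (Fin.last d) = ε (Fin.last d) :=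
      Function.update_of_ne (Fin.castSucc_lt_last i).ne' _ _
    have hoffc : ∀ k : Fin d, k ≠ i → ε' (Fin.castSucc k) = ε (Fin.castSucc k) := by
      intro k hk
      exact Function.update_of_ne (fun h => hk (Fin.castSucc_injective d h)) _ _
    have hmax : max 0 (-⨅ k : Fin d,
          (y k - ((ε (Fin.castSucc k) : ℕ) : ℝ) - ((ε (Fin.last d) : ℕ) : ℝ))) =
        max 0 (-⨅ k : Fin d,
          (y k - ((ε' (Fin.castSucc k) : ℕ) : ℝ) - ((ε' (Fin.last d) : ℕ) : ℝ))) := by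
      refine max_neg_iInf_congr _ _ i (fun k hk => by rw [hoffc k hk, hlast]) ?_ ?_
      · have b1 := val2_le_one (ε (Fin.castSucc i))
        have b2 := val2_le_one (ε (Fin.last d))
        linarith
      · have b1 := val2_le_one (ε' (Fin.castSucc i))
        have b2 := val2_le_one (ε' (Fin.last d))
        linarith
    have hsgn := sign_flip ε (Fin.castSucc i)
    rw [← hε'] at hsgn
    rw [hsgn, ← hmax]
    ring
  rw [inv1, inv2, inv3]
  ring

/-- at every point of `ℝ^d`, at most `d+1` of the integer shifts of the
Cartesian linear box spline are nonzero. -/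
theorem boxSpline_shifts_card_le (d : ℕ) (hd : 1 ≤ d) (x : Fin d → ℝ) :
    {k : Fin d → ℤ | boxSplineD d (fun i => x i - (k i : ℝ)) ≠ 0}.Finite ∧
    {k : Fin d → ℤ | boxSplineD d (fun i => x i - (k i : ℝ)) ≠ 0}.ncard ≤ d + 1 := by
  classical
  set S := {k : Fin d → ℤ | boxSplineD d (fun i => x i - (k i : ℝ)) ≠ 0} with hSdef
  have hmem1 : ∀ k ∈ S, ∀ i, 0 < x i - ((k i : ℤ) : ℝ) := by
    intro k hk i
    by_contra h
    push_neg at h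
    exact hk (boxSplineD_eq_zero_of_nonpos _ i h)
  have hmem2 : ∀ k ∈ S, ∀ i, x i - ((k i : ℤ) : ℝ) < 2 := by
    intro k hk i
    by_contra h
    push_neg at h
    exact hk (boxSplineD_eq_zero_of_ge_two _ i h)
  have hmem3 : ∀ k ∈ S, ∀ i j : Fin d,
      x i - ((k i : ℤ) : ℝ) < (x j - ((k j : ℤ) : ℝ)) + 1 := by
    intro k hk i j
    by_contra h
    push_neg at h
    exact hk (boxSplineD_eq_zero_of_gap _ i j (by linarith))
  have hval : ∀ k ∈ S, ∀ i, k i = ⌈x i⌉ - 1 ∨ k i = ⌈x i⌉ - 2 := by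
    intro k hk i
    have h1 : ((k i : ℤ) : ℝ) < x i := by have := hmem1 k hk i; linarith
    have h2 : x i ≤ ((k i : ℤ) : ℝ) + 2 := by have := hmem2 k hk i; linarith
    have hu : k i < ⌈x i⌉ := Int.lt_ceil.mpr h1
    have hl : ⌈x i⌉ ≤ k i + 2 := Int.ceil_le.mpr (by push_cast; linarith)
    omega
  set φ : (Fin d → ℤ) → ℕ :=
    fun k => (Finset.univ.filter fun i => k i = ⌈x i⌉ - 1).card with hφ
  have hinj : Set.InjOn φ S := by
    intro k₁ h₁ k₂ h₂ hcard
    set B₁ := Finset.univ.filter fun i => k₁ i = ⌈x i⌉ - 1 with hB₁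
    set B₂ := Finset.univ.filter fun i => k₂ i = ⌈x i⌉ - 1 with hB₂
    have hcard' : B₁.card = B₂.card := hcard
    suffices hB : B₁ = B₂ by
      funext i
      have hiff := Finset.ext_iff.mp hB i
      simp only [hB₁, hB₂, Finset.mem_filter, Finset.mem_univ, true_and] at hiff
      rcases hval k₁ h₁ i with e1 | e1 <;> rcases hval k₂ h₂ i with e2 | e2 <;> omega
    by_contra hne
    have h12 : (B₁ \ B₂).Nonempty := by
      rw [Finset.sdiff_nonempty]
      intro hsub
      exact hne (Finset.eq_of_subset_of_card_le hsub (le_of_eq hcard'.symm))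
    have h21 : (B₂ \ B₁).Nonempty := by
      rw [Finset.sdiff_nonempty]
      intro hsub
      exact hne (Finset.eq_of_subset_of_card_le hsub (le_of_eq hcard')).symm
    obtain ⟨i, hi⟩ := h12
    obtain ⟨j, hj⟩ := h21
    rw [Finset.mem_sdiff] at hi hj
    have hi1 : k₁ i = ⌈x i⌉ - 1 := by
      have := hi.1; simp only [hB₁, Finset.mem_filter] at this; exact this.2
    have hi2 : k₂ i = ⌈x i⌉ - 2 := by
      have := hi.2; simp only [hB₂, Finset.mem_filter, Finset.mem_univ, true_and] at this
      rcases hval k₂ h₂ i with e | e <;> omega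
    have hj2 : k₂ j = ⌈x j⌉ - 1 := by
      have := hj.1; simp only [hB₂, Finset.mem_filter] at this; exact this.2
    have hj1 : k₁ j = ⌈x j⌉ - 2 := by
      have := hj.2; simp only [hB₁, Finset.mem_filter, Finset.mem_univ, true_and] at this
      rcases hval k₁ h₁ j with e | e <;> omega
    have c1 := hmem3 k₁ h₁ j i
    have c2 := hmem3 k₂ h₂ i j
    rw [hj1, hi1] at c1
    rw [hi2, hj2] at c2
    push_cast at c1 c2
    linarith
  have hfin : S.Finite := by
    have hsub : S ⊆ Set.pi Set.univ fun i => ({⌈x i⌉ - 1, ⌈x i⌉ - 2} : Set ℤ) := by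
      intro k hk i _
      rcases hval k hk i with h | h <;> simp [h]
    exact (Set.Finite.pi fun i => (Set.finite_singleton _).insert _).subset hsub
  refine ⟨hfin, ?_⟩
  have himg : φ '' S ⊆ Set.Iio (d + 1) := by
    rintro _ ⟨k, hk, rfl⟩
    simp only [Set.mem_Iio, hφ]
    have hle : (Finset.univ.filter fun i => k i = ⌈x i⌉ - 1).card ≤
        (Finset.univ : Finset (Fin d)).card := Finset.card_filter_le _ _
    rw [Finset.card_univ, Fintype.card_fin] at hle
    omega
  calc S.ncard = (φ '' S).ncard := (Set.ncard_image_of_injOn hinj).symm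
    _ ≤ (Set.Iio (d + 1) : Set ℕ).ncard :=
        Set.ncard_le_ncard himg (Set.finite_Iio _)
    _ = d + 1 := by rw [← Finset.coe_range, Set.ncard_coe_finset, Finset.card_range]
end
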